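/- arXiv:1503.07598 — 4 statements merged into one kernel-verified Lean document; each statement's English description precedes it below -/
import Mathlib

section
/- Let A_ξ, A_η ∈ 𝔞 satisfy: (i) ⟨α, A_η⟩ ≤ 0 for every α ∈ Σ⁺ (i.e. −A_η lies in the closed positive Weyl chamber), and (ii) ⟨α, A_ξ⟩ ≥ 0 for every α ∈ Σ⁺ with ⟨α, A_η⟩ = 0. Then the subgroup U = {s ∈ W : s A_ξ = A_ξ and s A_η = A_η} of W is generated by the reflections s_{α_i} in those simple roots α_i satisfying ⟨α_i, A_ξ⟩ = 0 and ⟨α_i, A_η⟩ = 0. (This is Lemma 2 of the paper: the stabilizer in W of the complex point λ₀ = ξ₀ + iη₀ is generated by the reflections in the simple roots vanishing at A_{λ₀}.) -/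
open scoped RealInnerProductSpace

namespace Lemma2Aux

structure RootData (E : Type*) [NormedAddCommGroup E] [InnerProductSpace ℝ E] where
  Sig : Finset E
  hne : ∀ α ∈ Sig, α ≠ (0:E)
  refl : E → (E ≃ₗᵢ[ℝ] E)
  hrefl : ∀ α ∈ Sig, ∀ x : E, refl α x = x - (2 * ⟪x, α⟫ / ⟪α, α⟫) • α
  hmaps : ∀ α ∈ Sig, ∀ β ∈ Sig, refl α β ∈ Sig
  hcrys : ∀ α ∈ Sig, ∀ β ∈ Sig, ∃ m : ℤ, 2 * ⟪β, α⟫ / ⟪α, α⟫ = (m : ℝ)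
  l : ℕ
  a : Fin l → E
  ha_mem : ∀ i, a i ∈ Sig
  ha_indep : LinearIndependent ℝ a
  coeff : E → Fin l → ℤ
  hcoeff : ∀ α ∈ Sig, α = ∑ i, (coeff α i : ℝ) • a i ∧
      ((∀ i, 0 ≤ coeff α i) ∨ (∀ i, coeff α i ≤ 0))
  Sigplus : Finset E
  hSigplus : ∀ α : E, α ∈ Sigplus ↔ α ∈ Sig ∧ ∀ i, 0 ≤ coeff α i

namespace RootData

variable {E : Type*} [NormedAddCommGroup E] [InnerProductSpace ℝ E] (R : RootData E)

lemma inner_self_ne {α : E} (hα : α ∈ R.Sig) : ⟪α, α⟫ ≠ (0:ℝ) :=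
  (inner_self_ne_zero (𝕜 := ℝ)).2 (R.hne α hα)

lemma inner_self_pos {α : E} (hα : α ∈ R.Sig) : (0:ℝ) < ⟪α, α⟫ :=
  lt_of_le_of_ne real_inner_self_nonneg (Ne.symm (R.inner_self_ne hα))

lemma refl_apply_self {α : E} (hα : α ∈ R.Sig) : R.refl α α = -α := by
  rw [R.hrefl α hα α, mul_div_assoc, div_self (R.inner_self_ne hα), mul_one, two_smul]
  abel

lemma refl_inner {α : E} (hα : α ∈ R.Sig) (x : E) : ⟪R.refl α x, α⟫ = -⟪x, α⟫ := by
  rw [R.hrefl α hα x, inner_sub_left, real_inner_smul_left]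
  field_simp [R.inner_self_ne hα]
  rw [mul_div_assoc, div_self (R.inner_self_ne hα)]
  ring

lemma refl_refl {α : E} (hα : α ∈ R.Sig) (x : E) : R.refl α (R.refl α x) = x := by
  rw [R.hrefl α hα (R.refl α x), R.refl_inner hα x, R.hrefl α hα x]
  rw [sub_sub, ← add_smul]
  have : 2 * ⟪x, α⟫ / ⟪α, α⟫ + 2 * -⟪x, α⟫ / ⟪α, α⟫ = 0 := by ring
  rw [this, zero_smul, sub_zero]

lemma refl_mul_self {α : E} (hα : α ∈ R.Sig) : R.refl α * R.refl α = 1 := by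
  ext x; exact R.refl_refl hα x

lemma refl_inv {α : E} (hα : α ∈ R.Sig) : (R.refl α)⁻¹ = R.refl α :=
  inv_eq_of_mul_eq_one_right (R.refl_mul_self hα)

lemma refl_fix {α : E} (hα : α ∈ R.Sig) {x : E} (h : ⟪x, α⟫ = 0) : R.refl α x = x := by
  rw [R.hrefl α hα x, h, mul_zero, zero_div, zero_smul, sub_zero]

lemma refl_smul {α : E} (hα : α ∈ R.Sig) {c : ℝ} (hc : c ≠ 0) (hcα : c • α ∈ R.Sig) :
    R.refl (c • α) = R.refl α := by
  ext x
  rw [R.hrefl _ hcα x, R.hrefl α hα x, smul_smul, real_inner_smul_right,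
    real_inner_smul_left, real_inner_smul_right]
  have hcc : c * c ≠ 0 := mul_ne_zero hc hc
  have : 2 * (c * ⟪x, α⟫) / (c * (c * ⟪α, α⟫)) * c = 2 * ⟪x, α⟫ / ⟪α, α⟫ := by
    rw [div_mul_eq_mul_div, show 2 * (c * ⟪x, α⟫) * c = (c * c) * (2 * ⟪x, α⟫) by ring,
      show c * (c * ⟪α, α⟫) = (c * c) * ⟪α, α⟫ by ring, mul_div_mul_left _ _ hcc]
  rw [this]

lemma refl_conj {γ : E} (hγ : γ ∈ R.Sig) (g : E ≃ₗᵢ[ℝ] E) (hgγ : g γ ∈ R.Sig) :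
    R.refl (g γ) = g * R.refl γ * g⁻¹ := by
  ext x
  have h1 : (g * R.refl γ * g⁻¹) x = g (R.refl γ (g.symm x)) := rfl
  rw [h1, R.hrefl _ hgγ x, R.hrefl γ hγ (g.symm x), map_sub, map_smul,
    g.apply_symm_apply]
  congr 3
  · rw [← g.inner_map_map (g.symm x) γ, g.apply_symm_apply]
  · rw [← g.inner_map_map γ γ]

lemma coeff_unique {α : E} (hα : α ∈ R.Sig) (c : Fin R.l → ℝ)
    (h : α = ∑ i, c i • R.a i) : ∀ i, c i = (R.coeff α i : ℝ) := by
  have h2 := (R.hcoeff α hα).1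
  have h3 : ∑ i, (c i - (R.coeff α i : ℝ)) • R.a i = 0 := by
    simp only [sub_smul, Finset.sum_sub_distrib]
    rw [← h, ← h2, sub_self]
  intro i
  have := Fintype.linearIndependent_iff.1 R.ha_indep _ h3 i
  linarith [this]

lemma neg_mem {α : E} (hα : α ∈ R.Sig) : -α ∈ R.Sig := by
  have := R.hmaps α hα α hα
  rwa [R.refl_apply_self hα] at this

lemma coeff_neg {α : E} (hα : α ∈ R.Sig) (i : Fin R.l) :
    (R.coeff (-α) i : ℝ) = -(R.coeff α i : ℝ) := by
  have h : -α = ∑ j, (-(R.coeff α j : ℝ)) • R.a j := by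
    have h1 : ∑ j, (-(R.coeff α j : ℝ)) • R.a j = -∑ j, (R.coeff α j : ℝ) • R.a j := by
      simp [neg_smul]
    rw [h1, ← (R.hcoeff α hα).1]
  exact (R.coeff_unique (R.neg_mem hα) _ h i).symm

lemma pos_or_neg {α : E} (hα : α ∈ R.Sig) : α ∈ R.Sigplus ∨ -α ∈ R.Sigplus := by
  rcases (R.hcoeff α hα).2 with h | h
  · exact Or.inl ((R.hSigplus α).2 ⟨hα, h⟩)
  · refine Or.inr ((R.hSigplus (-α)).2 ⟨R.neg_mem hα, fun i => ?_⟩)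
    have h1 := R.coeff_neg hα i
    have h2 : (R.coeff α i : ℝ) ≤ 0 := by exact_mod_cast h i
    have h3 : (0:ℝ) ≤ (R.coeff (-α) i : ℝ) := by rw [h1]; linarith
    exact_mod_cast h3

lemma not_both {α : E} (h1 : α ∈ R.Sigplus) (h2 : -α ∈ R.Sigplus) : False := by
  have hα := ((R.hSigplus α).1 h1).1
  have hc1 := ((R.hSigplus α).1 h1).2
  have hc2 := ((R.hSigplus (-α)).1 h2).2
  have hz : ∀ i, (R.coeff α i : ℝ) = 0 := by
    intro i
    have ha : (0:ℝ) ≤ (R.coeff α i : ℝ) := by exact_mod_cast hc1 i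
    have hb : (0:ℝ) ≤ (R.coeff (-α) i : ℝ) := by exact_mod_cast hc2 i
    rw [R.coeff_neg hα i] at hb
    linarith
  have : α = 0 := by
    rw [(R.hcoeff α hα).1]
    exact Finset.sum_eq_zero fun i _ => by rw [hz i, zero_smul]
  exact R.hne α hα this

lemma mem_plus_sig {α : E} (h : α ∈ R.Sigplus) : α ∈ R.Sig := ((R.hSigplus α).1 h).1

lemma coeff_a (i j : Fin R.l) :
    (R.coeff (R.a i) j : ℝ) = if j = i then 1 else 0 := by
  have h : R.a i = ∑ j, (if j = i then (1:ℝ) else 0) • R.a j := by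
    simp [ite_smul]
  exact (R.coeff_unique (R.ha_mem i) _ h j).symm

lemma a_mem_plus (i : Fin R.l) : R.a i ∈ R.Sigplus := by
  refine (R.hSigplus (R.a i)).2 ⟨R.ha_mem i, fun j => ?_⟩
  have h0 : (0:ℝ) ≤ (R.coeff (R.a i) j : ℝ) := by
    rw [R.coeff_a i j]; split <;> norm_num
  exact_mod_cast h0

lemma smul_plus {β : E} (hβ : β ∈ R.Sigplus) {c : ℝ} (hc : 0 < c)
    (hmem : c • β ∈ R.Sig) : c • β ∈ R.Sigplus := by
  refine (R.hSigplus _).2 ⟨hmem, fun i => ?_⟩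
  have h : c • β = ∑ j, (c * (R.coeff β j : ℝ)) • R.a j := by
    conv_lhs => rw [(R.hcoeff β (R.mem_plus_sig hβ)).1]
    rw [Finset.smul_sum]
    simp [smul_smul]
  have h2 := (R.coeff_unique hmem _ h i).symm
  have h3 : (0:ℝ) ≤ (R.coeff β i : ℝ) := by exact_mod_cast ((R.hSigplus β).1 hβ).2 i
  have h4 : (0:ℝ) ≤ (R.coeff (c • β) i : ℝ) := by rw [h2]; positivity
  exact_mod_cast h4

lemma pos_of_smul_simple {β : E} (hβ : β ∈ R.Sigplus) {c : ℝ} {i : Fin R.l}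
    (h : β = c • R.a i) : 0 < c := by
  have hmem := R.mem_plus_sig hβ
  have hrep : β = ∑ j, (if j = i then c else 0) • R.a j := by
    rw [h]; simp [ite_smul]
  have hcu := R.coeff_unique hmem _ hrep i
  simp at hcu
  have hge : (0:ℝ) ≤ (R.coeff β i : ℝ) := by exact_mod_cast ((R.hSigplus β).1 hβ).2 i
  have hc0 : (0:ℝ) ≤ c := by rw [hcu]; exact hge
  rcases hc0.lt_or_eq with h' | h'
  · exact h'
  · exfalso
    apply R.hne β hmem
    rw [h, ← h', zero_smul]

lemma refl_simple_plus {β : E} (hβ : β ∈ R.Sigplus) {i : Fin R.l}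
    (hnm : ∀ c : ℝ, β ≠ c • R.a i) : R.refl (R.a i) β ∈ R.Sigplus := by
  have hβs := R.mem_plus_sig hβ
  have hγs : R.refl (R.a i) β ∈ R.Sig := R.hmaps _ (R.ha_mem i) β hβs
  obtain ⟨m, hm⟩ := R.hcrys (R.a i) (R.ha_mem i) β hβs
  have hγ : R.refl (R.a i) β = β - (m : ℝ) • R.a i := by
    rw [R.hrefl _ (R.ha_mem i) β, hm]
  have hrep : R.refl (R.a i) β
      = ∑ j, ((R.coeff β j : ℝ) - if j = i then (m:ℝ) else 0) • R.a j := by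
    rw [hγ]
    conv_lhs => rw [(R.hcoeff β hβs).1]
    simp only [sub_smul, Finset.sum_sub_distrib]
    congr 1
    simp [ite_smul]
  have hcγ : ∀ j, (R.coeff (R.refl (R.a i) β) j : ℝ)
      = (R.coeff β j : ℝ) - if j = i then (m:ℝ) else 0 :=
    fun j => (R.coeff_unique hγs _ hrep j).symm
  obtain ⟨j, hji, hj⟩ : ∃ j, j ≠ i ∧ (R.coeff β j : ℝ) ≠ 0 := by
    by_contra hcon
    push_neg at hcon
    apply hnm (R.coeff β i : ℝ)
    conv_lhs => rw [(R.hcoeff β hβs).1]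
    rw [Finset.sum_eq_single_of_mem i (Finset.mem_univ i)]
    intro b _ hb
    rw [hcon b hb, zero_smul]
  have hjpos : (0:ℝ) < (R.coeff β j : ℝ) := by
    have := ((R.hSigplus β).1 hβ).2 j
    have h0 : (0:ℝ) ≤ (R.coeff β j : ℝ) := by exact_mod_cast this
    exact lt_of_le_of_ne h0 (Ne.symm hj)
  have hjγ : (0:ℝ) < (R.coeff (R.refl (R.a i) β) j : ℝ) := by
    rw [hcγ j, if_neg hji, sub_zero]; exact hjpos
  rcases (R.hcoeff _ hγs).2 with hall | hall
  · exact (R.hSigplus _).2 ⟨hγs, hall⟩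
  · exfalso
    have : (R.coeff (R.refl (R.a i) β) j : ℝ) ≤ 0 := by exact_mod_cast hall j
    linarith

def mapsSig (g : E ≃ₗᵢ[ℝ] E) : Prop := ∀ β ∈ R.Sig, g β ∈ R.Sig

lemma mapsSig_inv {g : E ≃ₗᵢ[ℝ] E} (h : R.mapsSig g) : R.mapsSig g⁻¹ := by
  classical
  intro β hβ
  have himg : R.Sig.image (fun x => g x) = R.Sig := by
    apply Finset.eq_of_subset_of_card_le
    · intro x hx
      obtain ⟨y, hy, rfl⟩ := Finset.mem_image.1 hx
      exact h y hy
    · rw [Finset.card_image_of_injective _ g.injective]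
  rw [← himg] at hβ
  obtain ⟨y, hy, hyx⟩ := Finset.mem_image.1 hβ
  have hx : g⁻¹ β = y := by rw [← hyx]; exact g.symm_apply_apply y
  rw [hx]; exact hy

lemma mem_W_maps {g : E ≃ₗᵢ[ℝ] E}
    (hg : g ∈ Subgroup.closure {g : E ≃ₗᵢ[ℝ] E | ∃ α ∈ R.Sig, g = R.refl α}) :
    R.mapsSig g := by
  induction hg using Subgroup.closure_induction with
  | mem x hx => obtain ⟨α, hα, rfl⟩ := hx; exact fun β hβ => R.hmaps α hα β hβ
  | one => exact fun β hβ => hβ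
  | mul x y _ _ hx hy => exact fun β hβ => hx _ (hy β hβ)
  | inv x _ hx => exact R.mapsSig_inv hx

lemma exists_inner_pos {β : E} (hβ : β ∈ R.Sigplus) : ∃ i, 0 < ⟪β, R.a i⟫ := by
  by_contra hcon
  push_neg at hcon
  have hβs := R.mem_plus_sig hβ
  have hpos : (0:ℝ) < ⟪β, β⟫ := R.inner_self_pos hβs
  have hsum : ⟪β, β⟫ = ∑ j, (R.coeff β j : ℝ) * ⟪β, R.a j⟫ := by
    nth_rewrite 2 [(R.hcoeff β hβs).1]
    rw [inner_sum]
    simp [real_inner_smul_right]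
  have hle : ⟪β, β⟫ ≤ 0 := by
    rw [hsum]
    apply Finset.sum_nonpos
    intro j _
    have h1 : (0:ℝ) ≤ (R.coeff β j : ℝ) := by exact_mod_cast ((R.hSigplus β).1 hβ).2 j
    exact mul_nonpos_of_nonneg_of_nonpos h1 (hcon j)
  linarith

lemma coeff_refl_simple {β : E} (hβs : β ∈ R.Sig) (i : Fin R.l) {m : ℤ}
    (hm : 2 * ⟪β, R.a i⟫ / ⟪R.a i, R.a i⟫ = (m : ℝ)) (j : Fin R.l) :
    (R.coeff (R.refl (R.a i) β) j : ℝ)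
      = (R.coeff β j : ℝ) - if j = i then (m:ℝ) else 0 := by
  have hγs : R.refl (R.a i) β ∈ R.Sig := R.hmaps _ (R.ha_mem i) β hβs
  have hγ : R.refl (R.a i) β = β - (m : ℝ) • R.a i := by
    rw [R.hrefl _ (R.ha_mem i) β, hm]
  have hrep : R.refl (R.a i) β
      = ∑ j, ((R.coeff β j : ℝ) - if j = i then (m:ℝ) else 0) • R.a j := by
    rw [hγ]
    conv_lhs => rw [(R.hcoeff β hβs).1]
    simp only [sub_smul, Finset.sum_sub_distrib]
    congr 1
    simp [ite_smul]
  exact (R.coeff_unique hγs _ hrep j).symm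

/-- The height of a root. -/
def ht (β : E) : ℕ := ∑ i, (R.coeff β i).toNat

/-- The subgroup generated by the simple reflections. -/
def Ws : Subgroup (E ≃ₗᵢ[ℝ] E) :=
  Subgroup.closure {g : E ≃ₗᵢ[ℝ] E | ∃ i, g = R.refl (R.a i)}

lemma simple_mem_Ws (i : Fin R.l) : R.refl (R.a i) ∈ R.Ws :=
  Subgroup.subset_closure ⟨i, rfl⟩

lemma refl_mem_Ws_of_plus : ∀ n : ℕ, ∀ β ∈ R.Sigplus, R.ht β ≤ n → R.refl β ∈ R.Ws := by
  intro n
  induction n with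
  | zero =>
    intro β hβ hht
    exfalso
    apply R.hne β (R.mem_plus_sig hβ)
    rw [(R.hcoeff β (R.mem_plus_sig hβ)).1]
    apply Finset.sum_eq_zero
    intro j _
    have h1 : 0 ≤ R.coeff β j := ((R.hSigplus β).1 hβ).2 j
    have h2 : (R.coeff β j).toNat = 0 := by
      have := Finset.sum_eq_zero_iff_of_nonneg (fun i _ => Nat.zero_le _) |>.1
        (Nat.le_zero.1 hht) j (Finset.mem_univ j)
      exact this
    have : R.coeff β j = 0 := by omega
    rw [this]; simp
  | succ n ih =>
    intro β hβ hht
    have hβs := R.mem_plus_sig hβ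
    by_cases hcase : ∃ (i : Fin R.l) (c : ℝ), β = c • R.a i
    · obtain ⟨i, c, hc⟩ := hcase
      have hcpos : 0 < c := R.pos_of_smul_simple hβ hc
      have h1 : R.refl (c • R.a i) = R.refl (R.a i) :=
        R.refl_smul (R.ha_mem i) hcpos.ne' (hc ▸ hβs)
      rw [hc, h1]
      exact R.simple_mem_Ws i
    · push_neg at hcase
      obtain ⟨i, hip⟩ := R.exists_inner_pos hβ
      obtain ⟨m, hm⟩ := R.hcrys (R.a i) (R.ha_mem i) β hβs
      have hai : (0:ℝ) < ⟪R.a i, R.a i⟫ := R.inner_self_pos (R.ha_mem i)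
      have hmpos : 0 < m := by
        have : (0:ℝ) < (m:ℝ) := by rw [← hm]; positivity
        exact_mod_cast this
      set γ := R.refl (R.a i) β with hγdef
      have hγp : γ ∈ R.Sigplus := R.refl_simple_plus hβ (fun c => hcase i c)
      have hγs := R.mem_plus_sig hγp
      have hcγ := R.coeff_refl_simple hβs i hm
      have hcγi : R.coeff γ i = R.coeff β i - m := by
        have := hcγ i
        rw [if_pos rfl] at this
        exact_mod_cast this
      have hcγj : ∀ j, j ≠ i → R.coeff γ j = R.coeff β j := by
        intro j hj
        have := hcγ j
        rw [if_neg hj, sub_zero] at this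
        exact_mod_cast this
      have hhtlt : R.ht γ < R.ht β := by
        refine Finset.sum_lt_sum (fun j _ => ?_) ⟨i, Finset.mem_univ i, ?_⟩
        · rcases eq_or_ne j i with hj | hj
          · subst hj
            have h1 : 0 ≤ R.coeff γ j := ((R.hSigplus γ).1 hγp).2 j
            have h2 : R.coeff γ j = R.coeff β j - m := hcγi
            omega
          · rw [hcγj j hj]
        · have h1 : 0 ≤ R.coeff γ i := ((R.hSigplus γ).1 hγp).2 i
          omega
      have hih : R.refl γ ∈ R.Ws := ih γ hγp (by omega)
      have hβγ : β = R.refl (R.a i) γ := (R.refl_refl (R.ha_mem i) β).symm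
      have hconj : R.refl β = R.refl (R.a i) * R.refl γ * (R.refl (R.a i))⁻¹ := by
        rw [hβγ]
        exact R.refl_conj hγs (R.refl (R.a i)) (hβγ ▸ hβs)
      rw [hconj]
      exact mul_mem (mul_mem (R.simple_mem_Ws i) hih) (inv_mem (R.simple_mem_Ws i))

lemma refl_mem_Ws {β : E} (hβ : β ∈ R.Sig) : R.refl β ∈ R.Ws := by
  rcases R.pos_or_neg hβ with h | h
  · exact R.refl_mem_Ws_of_plus (R.ht β) β h le_rfl
  · have h1 : R.refl ((-1 : ℝ) • (-β)) = R.refl (-β) := by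
      apply R.refl_smul (R.neg_mem hβ) (by norm_num)
      simpa using hβ
    have h2 : ((-1 : ℝ) • (-β)) = β := by simp
    rw [← h2, h1]
    exact R.refl_mem_Ws_of_plus (R.ht (-β)) (-β) h le_rfl

lemma W_le_Ws {g : E ≃ₗᵢ[ℝ] E}
    (hg : g ∈ Subgroup.closure {g : E ≃ₗᵢ[ℝ] E | ∃ α ∈ R.Sig, g = R.refl α}) :
    g ∈ R.Ws := by
  refine Subgroup.closure_le R.Ws |>.2 ?_ hg
  rintro x ⟨α, hα, rfl⟩
  exact R.refl_mem_Ws hα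

lemma exists_list_of_mem_Ws {g : E ≃ₗᵢ[ℝ] E} (hg : g ∈ R.Ws) :
    ∃ L : List (E ≃ₗᵢ[ℝ] E), (∀ y ∈ L, ∃ i, y = R.refl (R.a i)) ∧ L.prod = g := by
  have h1 : g ∈ Submonoid.closure ({g : E ≃ₗᵢ[ℝ] E | ∃ i, g = R.refl (R.a i)} ∪
      {g : E ≃ₗᵢ[ℝ] E | ∃ i, g = R.refl (R.a i)}⁻¹) := by
    rw [← Subgroup.closure_toSubmonoid]
    exact hg
  obtain ⟨L, hL, hprod⟩ := Submonoid.exists_list_of_mem_closure h1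
  refine ⟨L, fun y hy => ?_, hprod⟩
  rcases hL y hy with h | h
  · exact h
  · obtain ⟨i, hi⟩ := Set.mem_inv.1 h
    refine ⟨i, ?_⟩
    have : y⁻¹ = R.refl (R.a i) := hi
    rw [← inv_inv y, this, R.refl_inv (R.ha_mem i)]

/-- The set of positive roots sent to negative roots by `w`. -/
noncomputable def NSet (w : E ≃ₗᵢ[ℝ] E) : Finset E :=
  @Finset.filter E (fun β => w β ∉ R.Sigplus) (Classical.decPred _) R.Sigplus

lemma mem_NSet {w : E ≃ₗᵢ[ℝ] E} {β : E} :
    β ∈ R.NSet w ↔ β ∈ R.Sigplus ∧ w β ∉ R.Sigplus := by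
  classical
  simp [NSet]

lemma descent {w : E ≃ₗᵢ[ℝ] E} (hw : R.mapsSig w) {i : Fin R.l}
    (hwa : w (R.a i) ∉ R.Sigplus) :
    (R.NSet (w * R.refl (R.a i))).card < (R.NSet w).card := by
  classical
  set si := R.refl (R.a i) with hsi
  have hai : R.a i ∈ R.NSet w := R.mem_NSet.2 ⟨R.a_mem_plus i, hwa⟩
  have hwneg : -(w (R.a i)) ∈ R.Sigplus :=
    (R.pos_or_neg (hw _ (R.ha_mem i))).resolve_left hwa
  have hsub : (R.NSet (w * si)).image (fun β => si β) ⊆ (R.NSet w).erase (R.a i) := by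
    intro x hx
    obtain ⟨β, hβ, rfl⟩ := Finset.mem_image.1 hx
    obtain ⟨hβp, hβw⟩ := R.mem_NSet.1 hβ
    have hβs := R.mem_plus_sig hβp
    -- β is not a multiple of `a i`
    have hnm : ∀ c : ℝ, β ≠ c • R.a i := by
      intro c hc
      have hcpos : 0 < c := R.pos_of_smul_simple hβp hc
      have h1 : si β = -β := by
        rw [hc, map_smul, R.refl_apply_self (R.ha_mem i), smul_neg, ← hc]
      have h2 : (w * si) β = -(w β) := by
        have : (w * si) β = w (si β) := rfl
        rw [this, h1, map_neg]
      have h3 : w β = c • w (R.a i) := by rw [hc, map_smul]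
      have h4 : -(w β) = c • (-(w (R.a i))) := by rw [h3, smul_neg]
      have h5 : -(w β) ∈ R.Sig := by
        rw [← h2]; exact hw _ (R.hmaps _ (R.ha_mem i) β hβs)
      have h6 : -(w β) ∈ R.Sigplus := by
        rw [h4] at h5 ⊢
        exact R.smul_plus hwneg hcpos h5
      rw [h2] at hβw
      exact hβw h6
    have hsiβ : si β ∈ R.Sigplus := R.refl_simple_plus hβp hnm
    have hwsiβ : w (si β) ∉ R.Sigplus := hβw
    refine Finset.mem_erase.2 ⟨?_, R.mem_NSet.2 ⟨hsiβ, hwsiβ⟩⟩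
    intro hcon
    have : β = si (R.a i) := by
      rw [← hcon, hsi]
      exact (R.refl_refl (R.ha_mem i) β).symm
    rw [R.refl_apply_self (R.ha_mem i)] at this
    apply R.not_both (R.a_mem_plus i)
    rw [← this]
    exact hβp
  calc (R.NSet (w * si)).card
      = ((R.NSet (w * si)).image (fun β => si β)).card :=
        (Finset.card_image_of_injective _ si.injective).symm
    _ ≤ ((R.NSet w).erase (R.a i)).card := Finset.card_le_card hsub
    _ < (R.NSet w).card := Finset.card_erase_lt_of_mem hai

lemma exists_descent {w : E ≃ₗᵢ[ℝ] E} (hw : R.mapsSig w)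
    (hne : (R.NSet w).Nonempty) : ∃ i, w (R.a i) ∉ R.Sigplus := by
  by_contra hcon
  push_neg at hcon
  obtain ⟨β, hβ⟩ := hne
  obtain ⟨hβp, hβw⟩ := R.mem_NSet.1 hβ
  have hβs := R.mem_plus_sig hβp
  have h1 : w β = ∑ i, (R.coeff β i : ℝ) • w (R.a i) := by
    conv_lhs => rw [(R.hcoeff β hβs).1]
    rw [map_sum]
    simp [map_smul]
  have h2 : w β = ∑ j, (∑ i, (R.coeff β i : ℝ) * (R.coeff (w (R.a i)) j : ℝ)) • R.a j := by
    rw [h1]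
    calc ∑ i, (R.coeff β i : ℝ) • w (R.a i)
        = ∑ i, ∑ j, ((R.coeff β i : ℝ) * (R.coeff (w (R.a i)) j : ℝ)) • R.a j := by
          refine Finset.sum_congr rfl fun i _ => ?_
          conv_lhs => rw [(R.hcoeff _ (R.mem_plus_sig (hcon i))).1]
          rw [Finset.smul_sum]
          simp [smul_smul]
      _ = ∑ j, ∑ i, ((R.coeff β i : ℝ) * (R.coeff (w (R.a i)) j : ℝ)) • R.a j :=
          Finset.sum_comm
      _ = ∑ j, (∑ i, (R.coeff β i : ℝ) * (R.coeff (w (R.a i)) j : ℝ)) • R.a j := by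
          refine Finset.sum_congr rfl fun j _ => ?_
          rw [Finset.sum_smul]
  have h3 := R.coeff_unique (hw β hβs) _ h2
  apply hβw
  refine (R.hSigplus _).2 ⟨hw β hβs, fun j => ?_⟩
  have h4 : (0:ℝ) ≤ (R.coeff (w β) j : ℝ) := by
    rw [← h3 j]
    apply Finset.sum_nonneg
    intro i _
    have ha : (0:ℝ) ≤ (R.coeff β i : ℝ) := by exact_mod_cast ((R.hSigplus β).1 hβp).2 i
    have hb : (0:ℝ) ≤ (R.coeff (w (R.a i)) j : ℝ) := by
      exact_mod_cast ((R.hSigplus _).1 (hcon i)).2 j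
    positivity
  exact_mod_cast h4

lemma Ws_le_W : R.Ws ≤ Subgroup.closure {g : E ≃ₗᵢ[ℝ] E | ∃ α ∈ R.Sig, g = R.refl α} := by
  refine (Subgroup.closure_le _).2 ?_
  rintro x ⟨i, rfl⟩
  exact Subgroup.subset_closure ⟨R.a i, R.ha_mem i, rfl⟩

lemma prod_mem_Ws {L : List (E ≃ₗᵢ[ℝ] E)} (h : ∀ y ∈ L, ∃ i, y = R.refl (R.a i)) :
    L.prod ∈ R.Ws := by
  induction L with
  | nil => exact one_mem _
  | cons y L ih =>
    rw [List.prod_cons]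
    obtain ⟨i, rfl⟩ := h y List.mem_cons_self
    exact mul_mem (R.simple_mem_Ws i) (ih fun z hz => h z (List.mem_cons_of_mem _ hz))

lemma prod_maps {L : List (E ≃ₗᵢ[ℝ] E)} (h : ∀ y ∈ L, ∃ i, y = R.refl (R.a i)) :
    R.mapsSig L.prod :=
  R.mem_W_maps (R.Ws_le_W (R.prod_mem_Ws h))

lemma prod_simple_pos_eq_one :
    ∀ n : ℕ, ∀ L : List (E ≃ₗᵢ[ℝ] E), L.length ≤ n →
      (∀ y ∈ L, ∃ i, y = R.refl (R.a i)) →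
      (∀ β ∈ R.Sigplus, L.prod β ∈ R.Sigplus) → L.prod = 1 := by
  intro n
  induction n with
  | zero =>
    intro L hlen _ _
    rw [List.length_eq_zero_iff.1 (Nat.le_zero.1 hlen)]
    rfl
  | succ n ih =>
    intro L hlen hsimple hpos
    classical
    rcases L.eq_nil_or_concat with rfl | ⟨L', y, rfl⟩
    · rfl
    obtain ⟨k, hk⟩ := hsimple y (by simp)
    subst hk
    have hL'len : L'.length ≤ n := by
      have := hlen
      rw [List.length_concat] at this
      omega
    have hL'simple : ∀ y ∈ L', ∃ i, y = R.refl (R.a i) :=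
      fun y hy => hsimple y (by simp [hy])
    have hwprod : (L'.concat (R.refl (R.a k))).prod = L'.prod * R.refl (R.a k) :=
      List.prod_concat
    -- u (a k) is negative
    have huak : L'.prod (R.a k) ∉ R.Sigplus := by
      intro hcon
      have h1 : (L'.concat (R.refl (R.a k))).prod (R.a k) ∈ R.Sigplus :=
        hpos _ (R.a_mem_plus k)
      have h2 : (L'.concat (R.refl (R.a k))).prod (R.a k)
          = L'.prod (R.refl (R.a k) (R.a k)) := by rw [hwprod]; rfl
      rw [h2, R.refl_apply_self (R.ha_mem k), map_neg] at h1
      exact R.not_both hcon h1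
    -- crossing point
    have hPlen : ((L'.drop L'.length).prod) (R.a k) ∈ R.Sigplus := by
      rw [List.drop_length]
      exact R.a_mem_plus k
    set P : ℕ → Prop := fun t => ((L'.drop t).prod) (R.a k) ∈ R.Sigplus with hP
    have hex : ∃ t, P t := ⟨L'.length, hPlen⟩
    set t0 := Nat.find hex with ht0def
    have ht0 : P t0 := Nat.find_spec hex
    have ht0le : t0 ≤ L'.length := Nat.find_min' hex hPlen
    have ht0ne : t0 ≠ 0 := by
      intro hcon
      have := ht0
      rw [hcon] at this
      simp only [P, List.drop_zero] at this
      exact huak this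
    set t := t0 - 1 with htdef
    have htt0 : t + 1 = t0 := by omega
    have htP : ¬ P t := Nat.find_min hex (by omega)
    have htlt : t < L'.length := by omega
    -- identify the crossing
    have hdrop : L'.drop t = L'[t] :: L'.drop (t + 1) := List.drop_eq_getElem_cons htlt
    obtain ⟨j, hj⟩ := hL'simple L'[t] (List.getElem_mem htlt)
    set p := (L'.drop t0).prod with hpdef
    set γ := p (R.a k) with hγdef
    have hγp : γ ∈ R.Sigplus := ht0
    have hγs : γ ∈ R.Sig := R.mem_plus_sig hγp
    have hsjγ : R.refl (R.a j) γ ∉ R.Sigplus := by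
      intro hcon
      apply htP
      have h1 : (L'.drop t).prod = R.refl (R.a j) * p := by
        rw [hdrop, List.prod_cons, hj, htt0]
      show ((L'.drop t).prod) (R.a k) ∈ R.Sigplus
      rw [h1]
      exact hcon
    obtain ⟨c, hc⟩ : ∃ c : ℝ, γ = c • R.a j := by
      by_contra hcon
      push_neg at hcon
      exact hsjγ (R.refl_simple_plus hγp hcon)
    have hcpos : 0 < c := R.pos_of_smul_simple hγp hc
    have hreflγ : R.refl γ = R.refl (R.a j) := by
      rw [hc]
      exact R.refl_smul (R.ha_mem j) hcpos.ne' (hc ▸ hγs)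
    have hpW : p ∈ Subgroup.closure {g : E ≃ₗᵢ[ℝ] E | ∃ α ∈ R.Sig, g = R.refl α} :=
      R.Ws_le_W (R.prod_mem_Ws fun y hy => hL'simple y (List.mem_of_mem_drop hy))
    have hconj : R.refl γ = p * R.refl (R.a k) * p⁻¹ :=
      R.refl_conj (R.ha_mem k) p (R.mem_W_maps hpW _ (R.ha_mem k))
    have hkey : R.refl (R.a j) * p = p * R.refl (R.a k) := by
      rw [← hreflγ, hconj, inv_mul_cancel_right]
    -- rewrite the word
    have hL'split : L'.prod = (L'.take t).prod * (L'.drop t).prod := by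
      rw [← List.prod_append, List.take_append_drop]
    have hdropprod : (L'.drop t).prod = R.refl (R.a j) * p := by
      rw [hdrop, List.prod_cons, hj, htt0]
    have hw2 : (L'.concat (R.refl (R.a k))).prod
        = ((L'.take t) ++ (L'.drop t0)).prod := by
      rw [hwprod, hL'split, hdropprod, hkey, List.prod_append]
      rw [mul_assoc, mul_assoc, R.refl_mul_self (R.ha_mem k), mul_one]
    have hlen2 : ((L'.take t) ++ (L'.drop t0)).length ≤ n := by
      rw [List.length_append, List.length_take, List.length_drop]
      omega
    have hsimple2 : ∀ y ∈ (L'.take t) ++ (L'.drop t0), ∃ i, y = R.refl (R.a i) := by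
      intro y hy
      rcases List.mem_append.1 hy with h | h
      · exact hL'simple y (List.mem_of_mem_take h)
      · exact hL'simple y (List.mem_of_mem_drop h)
    have hpos2 : ∀ β ∈ R.Sigplus, ((L'.take t) ++ (L'.drop t0)).prod β ∈ R.Sigplus := by
      intro β hβ
      rw [← hw2]
      exact hpos β hβ
    have := ih _ hlen2 hsimple2 hpos2
    rw [hw2, this]

end RootData
end Lemma2Aux

open Lemma2Aux in
/-- Lemma 2 of the paper: if `-A_η` lies in the closed positive Weyl chamber and
`⟪α, A_ξ⟫ ≥ 0` for every positive root `α` orthogonal to `A_η`, then the subgroup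
`U = {s ∈ W : s A_ξ = A_ξ, s A_η = A_η}` of the Weyl group is generated by the
reflections in those simple roots vanishing at both `A_ξ` and `A_η`. -/
theorem stabilizer_generated_by_simple_reflections
    {E : Type*} [NormedAddCommGroup E] [InnerProductSpace ℝ E] [FiniteDimensional ℝ E]
    -- the root system `Σ`
    (Sig : Finset E)
    (hSig_ne : ∀ α ∈ Sig, α ≠ (0 : E))
    (hSig_span : Submodule.span ℝ (Sig : Set E) = ⊤)
    -- the reflections `s_α(x) = x - (2⟪x,α⟫/⟪α,α⟫) α`
    (refl : E → (E ≃ₗᵢ[ℝ] E))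
    (hrefl : ∀ α ∈ Sig, ∀ x : E, refl α x = x - (2 * ⟪x, α⟫ / ⟪α, α⟫) • α)
    (hrefl_maps : ∀ α ∈ Sig, ∀ β ∈ Sig, refl α β ∈ Sig)
    (hcrys : ∀ α ∈ Sig, ∀ β ∈ Sig, ∃ m : ℤ, 2 * ⟪β, α⟫ / ⟪α, α⟫ = (m : ℝ))
    -- the Weyl group `W`
    (W : Subgroup (E ≃ₗᵢ[ℝ] E))
    (hW : W = Subgroup.closure {g : E ≃ₗᵢ[ℝ] E | ∃ α ∈ Sig, g = refl α})
    -- the simple roots `α₁, …, α_ℓ`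
    {l : ℕ} (a : Fin l → E)
    (ha_mem : ∀ i, a i ∈ Sig)
    (ha_indep : LinearIndependent ℝ a)
    (ha_span : Submodule.span ℝ (Set.range a) = ⊤)
    -- integer coefficients of roots w.r.t. the simple roots, all `≥ 0` or all `≤ 0`
    (coeff : E → Fin l → ℤ)
    (hcoeff : ∀ α ∈ Sig, α = ∑ i, (coeff α i : ℝ) • a i ∧
        ((∀ i, 0 ≤ coeff α i) ∨ (∀ i, coeff α i ≤ 0)))
    -- the positive roots `Σ⁺`
    (Sigplus : Finset E)
    (hSigplus : ∀ α : E, α ∈ Sigplus ↔ α ∈ Sig ∧ ∀ i, 0 ≤ coeff α i)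
    (Aξ Aη : E)
    (hη : ∀ α ∈ Sigplus, ⟪α, Aη⟫ ≤ 0)
    (hξ : ∀ α ∈ Sigplus, ⟪α, Aη⟫ = 0 → 0 ≤ ⟪α, Aξ⟫) :
    {s : E ≃ₗᵢ[ℝ] E | s ∈ W ∧ s Aξ = Aξ ∧ s Aη = Aη} =
      (Subgroup.closure {g : E ≃ₗᵢ[ℝ] E |
          ∃ i : Fin l, ⟪a i, Aξ⟫ = 0 ∧ ⟪a i, Aη⟫ = 0 ∧ g = refl (a i)} :
        Subgroup (E ≃ₗᵢ[ℝ] E)) := by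
  set R : RootData E :=
    ⟨Sig, hSig_ne, refl, hrefl, hrefl_maps, hcrys, l, a, ha_mem, ha_indep, coeff,
      hcoeff, Sigplus, hSigplus⟩ with hR
  set G : Subgroup (E ≃ₗᵢ[ℝ] E) := Subgroup.closure {g : E ≃ₗᵢ[ℝ] E |
      ∃ i : Fin l, ⟪a i, Aξ⟫ = 0 ∧ ⟪a i, Aη⟫ = 0 ∧ g = refl (a i)} with hG
  have hfix : ∀ i : Fin l, ⟪a i, Aξ⟫ = 0 → ⟪a i, Aη⟫ = 0 →
      refl (a i) Aξ = Aξ ∧ refl (a i) Aη = Aη := by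
    intro i h1 h2
    constructor
    · exact R.refl_fix (ha_mem i) (by rw [real_inner_comm]; exact h1)
    · exact R.refl_fix (ha_mem i) (by rw [real_inner_comm]; exact h2)
  ext g
  simp only [Set.mem_setOf_eq, SetLike.mem_coe]
  constructor
  · rintro ⟨hgW, hgξ, hgη⟩
    rw [hW] at hgW
    -- strong induction on the number of positive roots sent to negative roots
    have main : ∀ n : ℕ, ∀ w : E ≃ₗᵢ[ℝ] E,
        w ∈ Subgroup.closure {g : E ≃ₗᵢ[ℝ] E | ∃ α ∈ Sig, g = refl α} →
        (R.NSet w).card ≤ n → w Aξ = Aξ → w Aη = Aη → w ∈ G := by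
      intro n
      induction n with
      | zero =>
        intro w hwW hcard _ _
        have hempty : R.NSet w = ∅ := Finset.card_eq_zero.1 (Nat.le_zero.1 hcard)
        have hpos : ∀ β ∈ R.Sigplus, w β ∈ R.Sigplus := by
          intro β hβ
          by_contra hcon
          have : β ∈ R.NSet w := R.mem_NSet.2 ⟨hβ, hcon⟩
          rw [hempty] at this
          exact absurd this (Finset.notMem_empty β)
        obtain ⟨L, hsimp, hprod⟩ := R.exists_list_of_mem_Ws (R.W_le_Ws hwW)
        have h1 : L.prod = 1 := by
          refine R.prod_simple_pos_eq_one L.length L le_rfl hsimp ?_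
          rw [hprod]
          exact hpos
        rw [← hprod, h1]
        exact one_mem G
      | succ n ih =>
        intro w hwW hcard hwξ hwη
        by_cases h0 : (R.NSet w).card ≤ n
        · exact ih w hwW h0 hwξ hwη
        · have hne : (R.NSet w).Nonempty := by
            rw [← Finset.card_pos]
            omega
          obtain ⟨i, hi⟩ := R.exists_descent (R.mem_W_maps hwW) hne
          have haip : a i ∈ Sigplus := R.a_mem_plus i
          have hwa_sig : w (a i) ∈ Sig := R.mem_W_maps hwW _ (ha_mem i)
          have hneg : -(w (a i)) ∈ Sigplus := (R.pos_or_neg hwa_sig).resolve_left hi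
          have h3 : ⟪w (a i), Aη⟫ = ⟪a i, Aη⟫ := by
            conv_lhs => rw [← hwη]
            exact w.inner_map_map (a i) Aη
          have h3' : ⟪w (a i), Aξ⟫ = ⟪a i, Aξ⟫ := by
            conv_lhs => rw [← hwξ]
            exact w.inner_map_map (a i) Aξ
          have h2 : ⟪-(w (a i)), Aη⟫ ≤ 0 := hη _ hneg
          rw [inner_neg_left, h3] at h2
          have h1 : ⟪a i, Aη⟫ ≤ 0 := hη _ haip
          have hη0 : ⟪a i, Aη⟫ = 0 := le_antisymm h1 (by linarith)
          have hwη0 : ⟪-(w (a i)), Aη⟫ = 0 := by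
            rw [inner_neg_left, h3, hη0, neg_zero]
          have h4 : 0 ≤ ⟪a i, Aξ⟫ := hξ _ haip hη0
          have h5 : 0 ≤ ⟪-(w (a i)), Aξ⟫ := hξ _ hneg hwη0
          rw [inner_neg_left, h3'] at h5
          have hξ0 : ⟪a i, Aξ⟫ = 0 := le_antisymm (by linarith) h4
          obtain ⟨hsξ, hsη⟩ := hfix i hξ0 hη0
          have hsW : refl (a i) ∈ Subgroup.closure
              {g : E ≃ₗᵢ[ℝ] E | ∃ α ∈ Sig, g = refl α} :=
            Subgroup.subset_closure ⟨a i, ha_mem i, rfl⟩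
          have hw'W : w * refl (a i) ∈ Subgroup.closure
              {g : E ≃ₗᵢ[ℝ] E | ∃ α ∈ Sig, g = refl α} := mul_mem hwW hsW
          have hw'ξ : (w * refl (a i)) Aξ = Aξ := by
            show w (refl (a i) Aξ) = Aξ
            rw [hsξ, hwξ]
          have hw'η : (w * refl (a i)) Aη = Aη := by
            show w (refl (a i) Aη) = Aη
            rw [hsη, hwη]
          have hcard' : (R.NSet (w * refl (a i))).card ≤ n := by
            have hdes := R.descent (R.mem_W_maps hwW) hi
            have hrr : R.refl (R.a i) = refl (a i) := rfl
            rw [hrr] at hdes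
            omega
          have hw'G : w * refl (a i) ∈ G := ih _ hw'W hcard' hw'ξ hw'η
          have hsG : refl (a i) ∈ G := Subgroup.subset_closure ⟨i, hξ0, hη0, rfl⟩
          have hfin : (w * refl (a i)) * refl (a i) = w := by
            rw [mul_assoc, R.refl_mul_self (ha_mem i), mul_one]
          rw [← hfin]
          exact mul_mem hw'G hsG
    exact main (R.NSet g).card g hgW le_rfl hgξ hgη
  · intro hg
    induction hg using Subgroup.closure_induction with
    | mem x hx =>
      obtain ⟨i, h1, h2, rfl⟩ := hx
      obtain ⟨hfξ, hfη⟩ := hfix i h1 h2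
      exact ⟨hW ▸ Subgroup.subset_closure ⟨a i, ha_mem i, rfl⟩, hfξ, hfη⟩
    | one => exact ⟨one_mem W, rfl, rfl⟩
    | mul x y _ _ hx hy =>
      refine ⟨mul_mem hx.1 hy.1, ?_, ?_⟩
      · show x (y Aξ) = Aξ
        rw [hy.2.1, hx.2.1]
      · show x (y Aη) = Aη
        rw [hy.2.2, hx.2.2]
    | inv x _ hx =>
      refine ⟨inv_mem hx.1, ?_, ?_⟩
      · show x.symm Aξ = Aξ
        conv_lhs => rw [← hx.2.1]
        exact x.symm_apply_apply Aξ
      · show x.symm Aη = Aη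
        conv_lhs => rw [← hx.2.2]
        exact x.symm_apply_apply Aη
end

section
/- Let k₁, …, kₙ be pairwise distinct real numbers and p₁, …, pₙ polynomials with complex coefficients. If limsup_{t → +∞} |Σ_{r=1}^{n} e^{i k_r t} p_r(t)| = a is finite, then each p_r is a constant polynomial; and if moreover a = 0, then each p_r is the zero polynomial. -/
open scoped ENNReal

open Filter Polynomial Complex

private lemma norm_exp_I_mul (x y : ℝ) : ‖Complex.exp (Complex.I * (x * y))‖ = 1 := by
  rw [show (Complex.I * (x * y) : ℂ) = ((x * y : ℝ) : ℂ) * Complex.I by push_cast; ring]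
  exact Complex.norm_exp_ofReal_mul_I _

/-- Choice of a shift `c` making all the exponential multipliers distinct. -/
private lemma exists_good_c {n : ℕ} (k : Fin n → ℝ) (hk : Function.Injective k) :
    ∃ c : ℝ, 0 < c ∧ ∀ r s : Fin n, r ≠ s →
      Complex.exp (Complex.I * (k r * c)) ≠ Complex.exp (Complex.I * (k s * c)) := by
  set M : ℝ := ∑ r, ∑ s, |k r - k s| with hMdef
  have hM0 : 0 ≤ M := Finset.sum_nonneg fun r _ => Finset.sum_nonneg fun s _ => abs_nonneg _
  have hpi := Real.pi_pos
  refine ⟨Real.pi / (M + 1), by positivity, ?_⟩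
  set c : ℝ := Real.pi / (M + 1) with hcdef
  have hc0 : 0 < c := by positivity
  intro r s hrs heq
  rw [Complex.exp_eq_exp_iff_exists_int] at heq
  obtain ⟨m, hm⟩ := heq
  have him : (k r : ℝ) * c = k s * c + m * (2 * Real.pi) := by
    have := congrArg Complex.im hm
    simpa using this
  have hbound : |k r - k s| ≤ M := by
    have h1 : |k r - k s| ≤ ∑ s', |k r - k s'| :=
      Finset.single_le_sum (f := fun s' => |k r - k s'|) (fun _ _ => abs_nonneg _)
        (Finset.mem_univ s)
    have h2 : (∑ s', |k r - k s'|) ≤ M :=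
      Finset.single_le_sum (f := fun r' => ∑ s', |k r' - k s'|)
        (fun _ _ => Finset.sum_nonneg fun _ _ => abs_nonneg _) (Finset.mem_univ r)
    linarith
  have hsmall : |(k r - k s) * c| < 2 * Real.pi := by
    rw [abs_mul, abs_of_pos hc0]
    have : |k r - k s| * c ≤ M * c := by nlinarith [abs_nonneg (k r - k s)]
    have hcm : c * (M + 1) = Real.pi := div_mul_cancel₀ _ (by linarith)
    nlinarith
  rcases eq_or_ne m 0 with hm0 | hm0
  · rw [hm0] at him
    push_cast at him
    have : k r = k s := mul_right_cancel₀ (ne_of_gt hc0) (by linarith)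
    exact hrs (hk this)
  · have h1 : (1 : ℝ) ≤ |(m : ℝ)| := by
      have : (1 : ℤ) ≤ |m| := Int.one_le_abs hm0
      exact_mod_cast this
    have : (k r - k s) * c = m * (2 * Real.pi) := by linarith
    rw [this, abs_mul] at hsmall
    have : |(2 : ℝ) * Real.pi| = 2 * Real.pi := abs_of_pos (by linarith)
    rw [this] at hsmall
    nlinarith

/-- Linear independence at infinity of pure exponentials: if a finite combination of
`e^{i k t}` with distinct `k` tends to `0`, all coefficients vanish. -/
private lemma coeff_zero_of_tendsto_zero :
    ∀ (n : ℕ) (k : Fin n → ℝ), Function.Injective k → ∀ (c : Fin n → ℂ),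
      Filter.Tendsto (fun t : ℝ => ∑ r, Complex.exp (Complex.I * (k r * t)) * c r)
        Filter.atTop (nhds 0) → ∀ r, c r = 0 := by
  intro n
  induction n with
  | zero => intro k _ c _ r; exact r.elim0
  | succ n ih =>
    intro k hk c hf
    obtain ⟨c₀, hc₀pos, hc₀⟩ := exists_good_c k hk
    set s : Fin (n + 1) := Fin.last n with hsdef
    set f : ℝ → ℂ := fun t => ∑ r, Complex.exp (Complex.I * (k r * t)) * c r with hfdef
    have hshift : Tendsto (fun t => f (t + c₀)) atTop (nhds 0) :=
      hf.comp (tendsto_atTop_add_const_right _ c₀ tendsto_id)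
    have hg : Tendsto (fun t => f (t + c₀) - Complex.exp (Complex.I * (k s * c₀)) * f t)
        atTop (nhds 0) := by
      have := hshift.sub (hf.const_mul (Complex.exp (Complex.I * (k s * c₀))))
      simpa using this
    have key : ∀ t : ℝ, f (t + c₀) - Complex.exp (Complex.I * (k s * c₀)) * f t
        = ∑ r : Fin n, Complex.exp (Complex.I * (k r.castSucc * t)) *
            ((Complex.exp (Complex.I * (k r.castSucc * c₀))
              - Complex.exp (Complex.I * (k s * c₀))) * c r.castSucc) := by
      intro t
      have hterm : ∀ r : Fin (n + 1),
          Complex.exp (Complex.I * (k r * ((t + c₀ : ℝ) : ℂ))) * c r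
            - Complex.exp (Complex.I * (k s * c₀)) * (Complex.exp (Complex.I * (k r * t)) * c r)
          = Complex.exp (Complex.I * (k r * t)) *
              ((Complex.exp (Complex.I * (k r * c₀))
                - Complex.exp (Complex.I * (k s * c₀))) * c r) := by
        intro r
        have h : Complex.exp (Complex.I * (k r * ((t + c₀ : ℝ) : ℂ)))
            = Complex.exp (Complex.I * (k r * t)) * Complex.exp (Complex.I * (k r * c₀)) := by
          rw [← Complex.exp_add]; congr 1; push_cast; ring
        rw [h]; ring
      calc f (t + c₀) - Complex.exp (Complex.I * (k s * c₀)) * f t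
          = ∑ r : Fin (n + 1), (Complex.exp (Complex.I * (k r * ((t + c₀ : ℝ) : ℂ))) * c r
              - Complex.exp (Complex.I * (k s * c₀))
                * (Complex.exp (Complex.I * (k r * t)) * c r)) := by
            simp only [hfdef, Finset.mul_sum, ← Finset.sum_sub_distrib]
        _ = ∑ r : Fin (n + 1), Complex.exp (Complex.I * (k r * t)) *
              ((Complex.exp (Complex.I * (k r * c₀))
                - Complex.exp (Complex.I * (k s * c₀))) * c r) :=
            Finset.sum_congr rfl fun r _ => hterm r
        _ = _ := by
            rw [Fin.sum_univ_castSucc]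
            simp [hsdef]
    have hg' : Tendsto (fun t : ℝ => ∑ r : Fin n,
        Complex.exp (Complex.I * (k r.castSucc * t)) *
          ((Complex.exp (Complex.I * (k r.castSucc * c₀))
            - Complex.exp (Complex.I * (k s * c₀))) * c r.castSucc)) atTop (nhds 0) := by
      refine hg.congr fun t => key t
    have hkc : Function.Injective (fun r : Fin n => k r.castSucc) :=
      hk.comp (Fin.castSucc_injective n)
    have hzero := ih (fun r => k r.castSucc) hkc _ hg'
    have hcz : ∀ r : Fin n, c r.castSucc = 0 := by
      intro r
      have h := hzero r
      have hne : Complex.exp (Complex.I * (k r.castSucc * c₀))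
          - Complex.exp (Complex.I * (k s * c₀)) ≠ 0 :=
        sub_ne_zero.mpr (hc₀ _ _ (Fin.castSucc_lt_last r).ne)
      exact (mul_eq_zero.1 h).resolve_left hne
    have hfs : ∀ t : ℝ, f t = Complex.exp (Complex.I * (k s * t)) * c s := by
      intro t
      simp only [hfdef]
      rw [Fin.sum_univ_castSucc]
      simp [hcz, hsdef]
    have hnorm : Tendsto (fun _ : ℝ => ‖c s‖) atTop (nhds 0) := by
      have := hf.norm
      simp only [norm_zero] at this
      refine this.congr fun t => ?_
      rw [hfs t, norm_mul, norm_exp_I_mul _ _, one_mul]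
    have hcs : c s = 0 := by
      have := tendsto_nhds_unique hnorm tendsto_const_nhds
      exact norm_eq_zero.1 this.symm
    intro r
    refine Fin.lastCases ?_ ?_ r
    · exact hcs
    · exact fun i => hcz i

/-- If the exponential-polynomial sum is eventually bounded, all polynomials are constant. -/
private lemma natDegree_zero_of_bounded :
    ∀ (N n : ℕ) (k : Fin n → ℝ), Function.Injective k → ∀ (p : Fin n → Polynomial ℂ),
      (∑ r, (p r).natDegree) ≤ N →
      (∃ C : ℝ, ∀ᶠ t : ℝ in Filter.atTop,
        ‖∑ r, Complex.exp (Complex.I * (k r * t)) * (p r).eval (t : ℂ)‖ ≤ C) →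
      ∀ r, (p r).natDegree = 0 := by
  intro N
  induction N with
  | zero =>
    intro n k _ p hsum _ r
    have := Nat.le_zero.1 hsum
    have := (Finset.sum_eq_zero_iff).1 this r (Finset.mem_univ r)
    exact this
  | succ N ih =>
    intro n k hk p hsum hbdd
    by_cases hle : (∑ r, (p r).natDegree) ≤ N
    · exact ih n k hk p hle hbdd
    exfalso
    push_neg at hle
    have hex : ∃ s, 1 ≤ (p s).natDegree := by
      by_contra h
      push_neg at h
      have : (∑ r, (p r).natDegree) = 0 :=
        Finset.sum_eq_zero fun r _ => Nat.lt_one_iff.1 (h r)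
      omega
    obtain ⟨s, hs⟩ := hex
    obtain ⟨c₀, hc₀pos, hc₀⟩ := exists_good_c k hk
    set e : Fin n → ℂ := fun r => Complex.exp (Complex.I * (k r * c₀)) with hedef
    set q : Fin n → Polynomial ℂ := fun r =>
      Polynomial.C (e r) * (p r).comp (Polynomial.X + Polynomial.C (c₀ : ℂ))
        - Polynomial.C (e s) * p r with hqdef
    have hXC : (Polynomial.X + Polynomial.C (c₀ : ℂ)).natDegree = 1 :=
      Polynomial.natDegree_X_add_C _
    have hcompdeg : ∀ r, ((p r).comp (Polynomial.X + Polynomial.C (c₀ : ℂ))).natDegree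
        = (p r).natDegree := by
      intro r; rw [Polynomial.natDegree_comp, hXC, mul_one]
    have hcomplead : ∀ r, ((p r).comp (Polynomial.X + Polynomial.C (c₀ : ℂ))).leadingCoeff
        = (p r).leadingCoeff := by
      intro r
      rw [Polynomial.leadingCoeff_comp (by rw [hXC]; exact one_ne_zero)]
      simp [Polynomial.leadingCoeff_X_add_C]
    have hqle : ∀ r, (q r).natDegree ≤ (p r).natDegree := by
      intro r
      refine le_trans (Polynomial.natDegree_sub_le _ _) (max_le ?_ ?_)
      · exact le_trans (Polynomial.natDegree_C_mul_le _ _) (le_of_eq (hcompdeg r))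
      · exact Polynomial.natDegree_C_mul_le _ _
    have hps0 : p s ≠ 0 := fun h => by simp [h] at hs
    have hqslt : (q s).natDegree < (p s).natDegree := by
      have hcs : q s = Polynomial.C (e s) *
          ((p s).comp (Polynomial.X + Polynomial.C (c₀ : ℂ)) - p s) := by
        rw [hqdef, mul_sub]
      have hcompne : (p s).comp (Polynomial.X + Polynomial.C (c₀ : ℂ)) ≠ 0 := by
        intro h
        have := hcomplead s
        rw [h] at this
        simp at this
        exact hps0 (Polynomial.leadingCoeff_eq_zero.1 this.symm)
      have hdegeq : ((p s).comp (Polynomial.X + Polynomial.C (c₀ : ℂ))).degree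
          = (p s).degree := by
        rw [Polynomial.degree_eq_natDegree hcompne, Polynomial.degree_eq_natDegree hps0,
          hcompdeg s]
      have hsub : ((p s).comp (Polynomial.X + Polynomial.C (c₀ : ℂ)) - p s).degree
          < (p s).degree :=
        (Polynomial.degree_sub_lt hdegeq hcompne (hcomplead s)).trans_le (le_of_eq hdegeq)
      have : ((p s).comp (Polynomial.X + Polynomial.C (c₀ : ℂ)) - p s).natDegree
          < (p s).natDegree := by
        rcases eq_or_ne ((p s).comp (Polynomial.X + Polynomial.C (c₀ : ℂ)) - p s) 0 with h0 | h0
        · rw [h0, Polynomial.natDegree_zero]; exact hs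
        · exact Polynomial.natDegree_lt_natDegree h0 hsub
      calc (q s).natDegree ≤ _ := by rw [hcs]; exact Polynomial.natDegree_C_mul_le _ _
        _ < (p s).natDegree := this
    have hqsum : (∑ r, (q r).natDegree) ≤ N := by
      have : (∑ r, (q r).natDegree) < ∑ r, (p r).natDegree :=
        Finset.sum_lt_sum (fun i _ => hqle i) ⟨s, Finset.mem_univ s, hqslt⟩
      omega
    -- boundedness of the shifted difference
    obtain ⟨C, hC⟩ := hbdd
    set f : ℝ → ℂ := fun t => ∑ r, Complex.exp (Complex.I * (k r * t)) * (p r).eval (t : ℂ)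
      with hfdef
    have keyg : ∀ t : ℝ, (∑ r, Complex.exp (Complex.I * (k r * t)) * (q r).eval (t : ℂ))
        = f (t + c₀) - e s * f t := by
      intro t
      have hterm : ∀ r : Fin n,
          Complex.exp (Complex.I * (k r * ((t + c₀ : ℝ) : ℂ))) * (p r).eval ((t + c₀ : ℝ) : ℂ)
            - e s * (Complex.exp (Complex.I * (k r * t)) * (p r).eval (t : ℂ))
          = Complex.exp (Complex.I * (k r * t)) * (q r).eval (t : ℂ) := by
        intro r
        have hqe : (q r).eval (t : ℂ)
            = e r * (p r).eval ((t : ℂ) + (c₀ : ℂ)) - e s * (p r).eval (t : ℂ) := by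
          simp [hqdef, Polynomial.eval_comp]
        have h : Complex.exp (Complex.I * (k r * ((t + c₀ : ℝ) : ℂ)))
            = Complex.exp (Complex.I * (k r * t)) * e r := by
          rw [hedef, ← Complex.exp_add]; congr 1; push_cast; ring
        have hev : (p r).eval (((t + c₀ : ℝ)) : ℂ) = (p r).eval ((t : ℂ) + (c₀ : ℂ)) := by
          norm_cast
        rw [h, hqe, hev]; ring
      calc (∑ r, Complex.exp (Complex.I * (k r * t)) * (q r).eval (t : ℂ))
          = ∑ r, (Complex.exp (Complex.I * (k r * ((t + c₀ : ℝ) : ℂ))) * (p r).eval ((t + c₀ : ℝ) : ℂ)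
              - e s * (Complex.exp (Complex.I * (k r * t)) * (p r).eval (t : ℂ))) :=
            Finset.sum_congr rfl fun r _ => (hterm r).symm
        _ = f (t + c₀) - e s * f t := by
            simp only [hfdef, Finset.mul_sum, ← Finset.sum_sub_distrib]
    have hC' : ∀ᶠ t : ℝ in atTop, ‖f (t + c₀)‖ ≤ C :=
      (tendsto_atTop_add_const_right atTop c₀ tendsto_id).eventually hC
    have hgbdd : ∀ᶠ t : ℝ in atTop,
        ‖∑ r, Complex.exp (Complex.I * (k r * t)) * (q r).eval (t : ℂ)‖ ≤ C + C := by
      filter_upwards [hC, hC'] with t h1 h2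
      rw [keyg t]
      calc ‖f (t + c₀) - e s * f t‖ ≤ ‖f (t + c₀)‖ + ‖e s * f t‖ := norm_sub_le _ _
        _ = ‖f (t + c₀)‖ + ‖f t‖ := by rw [norm_mul, hedef, norm_exp_I_mul _ _, one_mul]
        _ ≤ C + C := add_le_add h2 h1
    have hq0 : ∀ r, (q r).natDegree = 0 := ih n k hk q hqsum ⟨C + C, hgbdd⟩
    -- all polynomials except s are constant
    have hconst : ∀ r : Fin n, r ≠ s → (p r).natDegree = 0 := by
      intro r hrs
      by_contra hd
      have hd1 : 1 ≤ (p r).natDegree := Nat.one_le_iff_ne_zero.2 hd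
      have hpr0 : p r ≠ 0 := fun h => by simp [h] at hd1
      have hcoeff : (q r).coeff ((p r).natDegree)
          = (e r - e s) * (p r).leadingCoeff := by
        rw [hqdef]
        simp only [Polynomial.coeff_sub, Polynomial.coeff_C_mul]
        have h1 : ((p r).comp (Polynomial.X + Polynomial.C (c₀ : ℂ))).coeff ((p r).natDegree)
            = (p r).leadingCoeff := by
          have := hcomplead r
          rw [Polynomial.leadingCoeff, hcompdeg r] at this
          exact this
        rw [h1, Polynomial.leadingCoeff]
        ring
      have hne : (q r).coeff ((p r).natDegree) ≠ 0 := by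
        rw [hcoeff]
        exact mul_ne_zero (sub_ne_zero.2 (hc₀ r s hrs)) (Polynomial.leadingCoeff_ne_zero.2 hpr0)
      have := Polynomial.le_natDegree_of_ne_zero hne
      rw [hq0 r] at this
      omega
    -- derive the contradiction with unboundedness of ‖p s‖
    set D : ℝ := ∑ r, ‖(p r).coeff 0‖ with hDdef
    have hbound : ∀ᶠ t : ℝ in atTop, ‖(p s).eval (t : ℂ)‖ ≤ C + D := by
      filter_upwards [hC] with t ht
      have hsplit : f t = Complex.exp (Complex.I * (k s * t)) * (p s).eval (t : ℂ)
          + ∑ r ∈ Finset.univ.erase s,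
              Complex.exp (Complex.I * (k r * t)) * (p r).eval (t : ℂ) := by
        simp only [hfdef]
        exact (Finset.add_sum_erase _ _ (Finset.mem_univ s)).symm
      have hnorm1 : ‖Complex.exp (Complex.I * (k s * t)) * (p s).eval (t : ℂ)‖
          = ‖(p s).eval (t : ℂ)‖ := by rw [norm_mul, norm_exp_I_mul _ _, one_mul]
      have htail : ‖∑ r ∈ Finset.univ.erase s,
          Complex.exp (Complex.I * (k r * t)) * (p r).eval (t : ℂ)‖ ≤ D := by
        refine le_trans (norm_sum_le _ _) ?_
        rw [hDdef]
        refine le_trans (Finset.sum_le_sum fun r hr => ?_)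
          (Finset.sum_le_sum_of_subset_of_nonneg (Finset.erase_subset _ _)
            fun _ _ _ => norm_nonneg _)
        have hrs : r ≠ s := Finset.ne_of_mem_erase hr
        have hpc := Polynomial.eq_C_of_natDegree_eq_zero (hconst r hrs)
        rw [norm_mul, norm_exp_I_mul _ _, one_mul]
        conv_lhs => rw [hpc]
        simp
      have htf : ‖f t‖ ≤ C := by simpa only [hfdef] using ht
      calc ‖(p s).eval (t : ℂ)‖
          = ‖Complex.exp (Complex.I * (k s * t)) * (p s).eval (t : ℂ)‖ := hnorm1.symm
        _ = ‖(Complex.exp (Complex.I * (k s * t)) * (p s).eval (t : ℂ)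
              + ∑ r ∈ Finset.univ.erase s,
                  Complex.exp (Complex.I * (k r * t)) * (p r).eval (t : ℂ))
            - ∑ r ∈ Finset.univ.erase s,
                  Complex.exp (Complex.I * (k r * t)) * (p r).eval (t : ℂ)‖ := by
            rw [add_sub_cancel_right]
        _ ≤ ‖Complex.exp (Complex.I * (k s * t)) * (p s).eval (t : ℂ)
              + ∑ r ∈ Finset.univ.erase s,
                  Complex.exp (Complex.I * (k r * t)) * (p r).eval (t : ℂ)‖
            + ‖∑ r ∈ Finset.univ.erase s,
                  Complex.exp (Complex.I * (k r * t)) * (p r).eval (t : ℂ)‖ := norm_sub_le _ _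
        _ = ‖f t‖ + ‖∑ r ∈ Finset.univ.erase s,
                  Complex.exp (Complex.I * (k r * t)) * (p r).eval (t : ℂ)‖ := by rw [hsplit]
        _ ≤ C + D := add_le_add htf htail
    have htends : Tendsto (fun t : ℝ => ‖(p s).eval ((t : ℂ))‖) atTop atTop := by
      refine Polynomial.tendsto_norm_atTop (p s) ?_ ?_
      · exact Polynomial.natDegree_pos_iff_degree_pos.1 hs
      · have : Tendsto (fun t : ℝ => |t|) atTop atTop :=
          tendsto_abs_atTop_atTop
        refine this.congr fun t => ?_
        rw [Complex.norm_real]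
        rfl
    have hgt : ∀ᶠ t : ℝ in atTop, C + D < ‖(p s).eval ((t : ℂ))‖ :=
      htends.eventually_gt_atTop (C + D)
    obtain ⟨t, h1, h2⟩ := (hbound.and hgt).exists
    linarith

/-- Harish-Chandra's elementary lemma: if `k₁, …, kₙ` are pairwise distinct real numbers,
`p₁, …, pₙ` are complex polynomials, and the `limsup` as `t → +∞` of
`|Σ_r e^{i k_r t} p_r(t)|` equals a finite value `a`, then each `p_r` is constant;
and if moreover `a = 0`, then each `p_r` is the zero polynomial. -/
theorem const_of_limsup_exp_poly_sum_finite
    {n : ℕ} (k : Fin n → ℝ) (hk : Function.Injective k)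
    (p : Fin n → Polynomial ℂ) (a : ℝ≥0∞) (ha : a ≠ ⊤)
    (hlimsup : Filter.limsup
        (fun t : ℝ =>
          (‖∑ r, Complex.exp (Complex.I * (k r * t)) * (p r).eval (t : ℂ)‖₊ : ℝ≥0∞))
        Filter.atTop = a) :
    (∀ r, ∃ c : ℂ, p r = Polynomial.C c) ∧ (a = 0 → ∀ r, p r = 0) := by
  set f : ℝ → ℂ := fun t => ∑ r, Complex.exp (Complex.I * (k r * t)) * (p r).eval (t : ℂ)
    with hfdef
  -- eventual boundedness from finite limsup
  have hlt : Filter.limsup (fun t : ℝ => (‖f t‖₊ : ℝ≥0∞)) Filter.atTop < a + 1 := by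
    rw [hlimsup]
    exact ENNReal.lt_add_right ha one_ne_zero
  have hev : ∀ᶠ t : ℝ in atTop, (‖f t‖₊ : ℝ≥0∞) < a + 1 :=
    Filter.eventually_lt_of_limsup_lt hlt
  have hbdd : ∃ C : ℝ, ∀ᶠ t : ℝ in atTop, ‖f t‖ ≤ C := by
    refine ⟨(a + 1).toReal, ?_⟩
    filter_upwards [hev] with t ht
    have h1 : ((‖f t‖₊ : ℝ≥0∞)).toReal ≤ (a + 1).toReal :=
      ENNReal.toReal_mono (by simp [ha]) ht.le
    simpa using h1
  have hdeg : ∀ r, (p r).natDegree = 0 :=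
    natDegree_zero_of_bounded (∑ r, (p r).natDegree) n k hk p le_rfl hbdd
  refine ⟨fun r => ⟨(p r).coeff 0, Polynomial.eq_C_of_natDegree_eq_zero (hdeg r)⟩, ?_⟩
  intro ha0 r
  -- from limsup = 0 deduce tendsto 0
  have htend0 : Tendsto (fun t : ℝ => (‖f t‖₊ : ℝ≥0∞)) atTop (nhds 0) := by
    rw [ENNReal.tendsto_nhds_zero]
    intro ε hε
    have : Filter.limsup (fun t : ℝ => (‖f t‖₊ : ℝ≥0∞)) Filter.atTop < ε := by
      rw [hlimsup, ha0]; exact hε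
    filter_upwards [Filter.eventually_lt_of_limsup_lt this] with t ht using ht.le
  have htendf : Tendsto f atTop (nhds 0) := by
    rw [tendsto_zero_iff_norm_tendsto_zero]
    have hcont := (ENNReal.tendsto_toReal (a := (0 : ℝ≥0∞)) (by simp)).comp htend0
    refine hcont.congr fun t => ?_
    simp
  -- rewrite as pure exponentials
  have hfc : ∀ t : ℝ, f t = ∑ r, Complex.exp (Complex.I * (k r * t)) * (p r).coeff 0 := by
    intro t
    simp only [hfdef]
    refine Finset.sum_congr rfl fun r _ => ?_
    conv_lhs => rw [Polynomial.eq_C_of_natDegree_eq_zero (hdeg r)]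
    simp
  have htendc : Tendsto (fun t : ℝ => ∑ r, Complex.exp (Complex.I * (k r * t)) * (p r).coeff 0)
      atTop (nhds 0) := htendf.congr fun t => hfc t
  have := coeff_zero_of_tendsto_zero n k hk (fun r => (p r).coeff 0) htendc r
  rw [Polynomial.eq_C_of_natDegree_eq_zero (hdeg r), this, map_zero]
end

section
/- Assume Σ is nonempty. Let A_ξ, A_η ∈ 𝔞 with −A_η lying in the open positive Weyl chamber 𝔞⁺ (the regular case). Then for every H₀ ∈ 𝔞⁺ the function of t > 0 given by t ↦ Σ_{s ∈ W} det(s) · exp( i t ⟨s A_ξ, H₀⟩ − t ⟨s A_η, H₀⟩ ) is unbounded on (0, ∞). (This is the regular case of the unboundedness of ζ_{λ₀}(H) = Σ_{s∈W} ε(s) e^{i⟨s A_{λ₀}, H⟩} / π(A_{λ₀}) for λ₀ = ξ₀ + iη₀ with η₀ regular: the term with s = e outweighs all the others along the ray t H₀ as t → +∞.) -/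
open scoped RealInnerProductSpace

open Filter


/-- Bundled data of a crystallographic root system with simple roots. -/
structure RSData (E : Type*) [NormedAddCommGroup E] [InnerProductSpace ℝ E] where
  Sig : Finset E
  hne : ∀ α ∈ Sig, α ≠ (0 : E)
  hspan : Submodule.span ℝ (Sig : Set E) = ⊤
  refl : E → (E ≃ₗᵢ[ℝ] E)
  hrefl : ∀ α ∈ Sig, ∀ x : E, refl α x = x - (2 * ⟪x, α⟫ / ⟪α, α⟫) • α
  hmaps : ∀ α ∈ Sig, ∀ β ∈ Sig, refl α β ∈ Sig
  hcrys : ∀ α ∈ Sig, ∀ β ∈ Sig, ∃ m : ℤ, 2 * ⟪β, α⟫ / ⟪α, α⟫ = (m : ℝ)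
  l : ℕ
  a : Fin l → E
  ha_mem : ∀ i, a i ∈ Sig
  ha_indep : LinearIndependent ℝ a
  coeff : E → Fin l → ℤ
  hcoeff : ∀ α ∈ Sig, α = ∑ i, (coeff α i : ℝ) • a i ∧
      ((∀ i, 0 ≤ coeff α i) ∨ (∀ i, coeff α i ≤ 0))

namespace RSData

variable {E : Type*} [NormedAddCommGroup E] [InnerProductSpace ℝ E] (S : RSData E)

/-- positive roots -/
def pos (α : E) : Prop := α ∈ S.Sig ∧ ∀ i, 0 ≤ S.coeff α i

lemma inner_self_ne (α : E) (hα : α ∈ S.Sig) : ⟪α, α⟫ ≠ 0 :=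
  inner_self_ne_zero.mpr (S.hne α hα)

lemma inner_self_pos' (α : E) (hα : α ∈ S.Sig) : (0:ℝ) < ⟪α, α⟫ :=
  by
  have h := S.inner_self_ne α hα
  have h2 : (0:ℝ) ≤ ⟪α, α⟫ := real_inner_self_nonneg
  cases h2.lt_or_eq with
  | inl h3 => exact h3
  | inr h3 => exact absurd h3.symm h

/-- uniqueness of coefficients -/
lemma coeff_unique {c d : Fin S.l → ℝ} (h : ∑ i, c i • S.a i = ∑ i, d i • S.a i) : c = d := by
  have h2 : ∑ i, (c i - d i) • S.a i = 0 := by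
    simp [sub_smul, Finset.sum_sub_distrib, h]
  have h3 := Fintype.linearIndependent_iff.mp S.ha_indep (fun i => c i - d i) h2
  funext i
  have h4 := h3 i
  linarith

lemma coeff_spec {α : E} (hα : α ∈ S.Sig) {c : Fin S.l → ℤ}
    (h : α = ∑ i, (c i : ℝ) • S.a i) : ∀ i, S.coeff α i = c i := by
  intro i
  have h1 := (S.hcoeff α hα).1
  have := congrFun (S.coeff_unique (h1.symm.trans h)) i
  exact_mod_cast this

lemma refl_self {α : E} (hα : α ∈ S.Sig) : S.refl α α = -α := by
  rw [S.hrefl α hα α]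
  rw [mul_div_assoc, div_self (S.inner_self_ne α hα)]
  module

lemma neg_mem {α : E} (hα : α ∈ S.Sig) : -α ∈ S.Sig := by
  have := S.hmaps α hα α hα
  rwa [S.refl_self hα] at this

lemma coeff_neg {α : E} (hα : α ∈ S.Sig) (i : Fin S.l) : S.coeff (-α) i = - S.coeff α i := by
  have h1 := (S.hcoeff α hα).1
  have : -α = ∑ i, ((- S.coeff α i : ℤ) : ℝ) • S.a i := by
    push_cast [neg_smul]
    rw [Finset.sum_neg_distrib, ← h1]
  exact S.coeff_spec (S.neg_mem hα) this i

lemma pos_or_neg {α : E} (hα : α ∈ S.Sig) : S.pos α ∨ S.pos (-α) := by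
  rcases (S.hcoeff α hα).2 with h | h
  · exact Or.inl ⟨hα, h⟩
  · right
    refine ⟨S.neg_mem hα, fun i => ?_⟩
    rw [S.coeff_neg hα]
    have := h i
    omega
  
lemma not_pos_neg {α : E} (h : S.pos α) : ¬ S.pos (-α) := by
  rintro ⟨hmem, hc⟩
  have : ∀ i, S.coeff α i = 0 := by
    intro i
    have := hc i
    rw [S.coeff_neg h.1] at this
    have := h.2 i
    omega
  have : α = 0 := by
    rw [(S.hcoeff α h.1).1]
    simp [this]
  exact S.hne α h.1 this

lemma pos_ne_zero {α : E} (h : S.pos α) : α ≠ 0 := S.hne α h.1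

lemma coeff_simple (i j : Fin S.l) : S.coeff (S.a i) j = if i = j then 1 else 0 := by
  have : S.a i = ∑ k, (((if i = k then 1 else 0 : ℤ)) : ℝ) • S.a k := by
    simp [Finset.sum_ite_eq, ite_smul]
  have h := S.coeff_spec (S.ha_mem i) this j
  simpa using h

lemma simple_pos (i : Fin S.l) : S.pos (S.a i) := by
  refine ⟨S.ha_mem i, fun j => ?_⟩
  rw [S.coeff_simple]
  split <;> norm_num

/-- reflection in a proportional vector agrees -/
lemma refl_propor {α β : E} (hα : α ∈ S.Sig) (hβ : β ∈ S.Sig) {c : ℝ} (hc : c ≠ 0)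
    (h : β = c • α) : S.refl β = S.refl α := by
  ext x
  rw [S.hrefl α hα x, S.hrefl β hβ x, h]
  rw [real_inner_smul_right, real_inner_smul_left, real_inner_smul_right, smul_smul]
  rw [show c * (c * ⟪α, α⟫) = (c * c) * ⟪α, α⟫ by ring,
    show 2 * (c * ⟪x, α⟫) / ((c * c) * ⟪α, α⟫) * c = ((c * c) * (2 * ⟪x, α⟫)) / ((c * c) * ⟪α, α⟫) by ring,
    mul_div_mul_left _ _ (mul_ne_zero hc hc)]

lemma refl_invol {α : E} (hα : α ∈ S.Sig) : S.refl α * S.refl α = 1 := by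
  ext x
  have h := S.hrefl α hα
  show S.refl α (S.refl α x) = x
  rw [h x, h _]
  have hne := S.inner_self_ne α hα
  rw [inner_sub_left, real_inner_smul_left, div_mul_cancel₀ _ hne]
  rw [show 2 * (⟪x, α⟫ - 2 * ⟪x, α⟫) / ⟪α, α⟫ = -(2 * ⟪x, α⟫ / ⟪α, α⟫) by ring]
  rw [neg_smul, sub_neg_eq_add]
  abel

lemma refl_inv {α : E} (hα : α ∈ S.Sig) : (S.refl α)⁻¹ = S.refl α :=
  eq_comm.mp (eq_inv_of_mul_eq_one_left (S.refl_invol hα))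

/-- conjugation: refl (u α) = u * refl α * u⁻¹ -/
lemma refl_conj {α : E} (hα : α ∈ S.Sig) (u : E ≃ₗᵢ[ℝ] E) (hu : u α ∈ S.Sig) :
    S.refl (u α) = u * S.refl α * u⁻¹ := by
  ext x
  show S.refl (u α) x = u (S.refl α (u⁻¹ x))
  rw [S.hrefl _ hu x, S.hrefl α hα]
  rw [map_sub, map_smul]
  rw [show ((u⁻¹ : E ≃ₗᵢ[ℝ] E) : E → E) = u.symm from rfl]
  congr 2
  · exact (u.apply_symm_apply x).symm
  have h1 : ⟪u α, u α⟫ = ⟪α, α⟫ := u.inner_map_map α α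
  have h2 : ⟪u.symm x, α⟫ = ⟪x, u α⟫ := by
    calc ⟪u.symm x, α⟫ = ⟪u (u.symm x), u α⟫ := (u.inner_map_map _ _).symm
    _ = ⟪x, u α⟫ := by rw [u.apply_symm_apply]
  rw [h1, h2]


lemma coeff_refl_simple {β : E} (hβ : β ∈ S.Sig) (i : Fin S.l) {m : ℤ}
    (hm : 2 * ⟪β, S.a i⟫ / ⟪S.a i, S.a i⟫ = (m : ℝ)) (j : Fin S.l) :
    S.coeff (S.refl (S.a i) β) j = S.coeff β j - (if i = j then m else 0) := by
  have hmem : S.refl (S.a i) β ∈ S.Sig := S.hmaps _ (S.ha_mem i) _ hβ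
  have hrw : S.refl (S.a i) β = ∑ j, ((S.coeff β j - (if i = j then m else 0) : ℤ) : ℝ) • S.a j := by
    rw [S.hrefl _ (S.ha_mem i) β, hm]
    have h1 : ∀ j ∈ Finset.univ, ((S.coeff β j - (if i = j then m else 0) : ℤ) : ℝ) • S.a j
        = (S.coeff β j : ℝ) • S.a j - (if i = j then (m:ℝ) • S.a j else 0) := by
      intro j _
      push_cast
      rw [sub_smul]
      congr 1
      split <;> simp
    rw [Finset.sum_congr rfl h1, Finset.sum_sub_distrib, ← (S.hcoeff β hβ).1,
      Finset.sum_ite_eq Finset.univ i (fun j => (m:ℝ) • S.a j), if_pos (Finset.mem_univ i)]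
  exact S.coeff_spec hmem hrw j

/-- Lemma A: a simple reflection maps a positive root either to a positive root, or
(when the root is proportional to the simple root) to its negative. -/
lemma reflA {β : E} (hβ : S.pos β) (i : Fin S.l) :
    S.pos (S.refl (S.a i) β) ∨ S.refl (S.a i) β = -β := by
  obtain ⟨m, hm⟩ := S.hcrys (S.a i) (S.ha_mem i) β hβ.1
  have hmem : S.refl (S.a i) β ∈ S.Sig := S.hmaps _ (S.ha_mem i) _ hβ.1
  have hc := S.coeff_refl_simple hβ.1 i hm
  by_cases hex : ∃ j, j ≠ i ∧ 0 < S.coeff β j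
  · left
    obtain ⟨j, hji, hj⟩ := hex
    have hcj : 0 < S.coeff (S.refl (S.a i) β) j := by
      rw [hc j, if_neg (fun h => hji h.symm)]
      omega
    refine ⟨hmem, ?_⟩
    rcases (S.hcoeff _ hmem).2 with h | h
    · exact h
    · exact absurd (h j) (by omega)
  · right
    push_neg at hex
    have hβ_eq : β = (S.coeff β i : ℝ) • S.a i := by
      conv_lhs => rw [(S.hcoeff β hβ.1).1]
      exact Finset.sum_eq_single i (fun j _ hj => by rw [show S.coeff β j = 0 from le_antisymm (hex j hj) (hβ.2 j)]; simp)
        (fun h => absurd (Finset.mem_univ i) h)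
    have : S.refl (S.a i) β = (S.coeff β i : ℝ) • (S.refl (S.a i) (S.a i)) := by
      conv_lhs => rw [hβ_eq]
      rw [map_smul]
    rw [this, S.refl_self (S.ha_mem i), smul_neg, ← hβ_eq]

lemma propor_of_not_pos_refl {β : E} (hβ : S.pos β) (i : Fin S.l)
    (h : ¬ S.pos (S.refl (S.a i) β)) : β = (S.coeff β i : ℝ) • S.a i ∧ S.coeff β i ≠ 0 := by
  -- re-derive the proportionality from the proof above
  by_cases hex : ∃ j, j ≠ i ∧ 0 < S.coeff β j
  · exfalso
    obtain ⟨m, hm⟩ := S.hcrys (S.a i) (S.ha_mem i) β hβ.1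
    have hmem : S.refl (S.a i) β ∈ S.Sig := S.hmaps _ (S.ha_mem i) _ hβ.1
    have hc := S.coeff_refl_simple hβ.1 i hm
    obtain ⟨j, hji, hj⟩ := hex
    have hcj : 0 < S.coeff (S.refl (S.a i) β) j := by
      rw [hc j, if_neg (fun h => hji h.symm)]
      omega
    refine h ⟨hmem, ?_⟩
    rcases (S.hcoeff _ hmem).2 with h2 | h2
    · exact h2
    · exact absurd (h2 j) (by omega)
  · push_neg at hex
    have hβ_eq : β = (S.coeff β i : ℝ) • S.a i := by
      conv_lhs => rw [(S.hcoeff β hβ.1).1]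
      exact Finset.sum_eq_single i (fun j _ hj => by rw [show S.coeff β j = 0 from le_antisymm (hex j hj) (hβ.2 j)]; simp)
        (fun h => absurd (Finset.mem_univ i) h)
    refine ⟨hβ_eq, fun h0 => ?_⟩
    apply S.hne β hβ.1
    rw [hβ_eq, h0]
    simp

/-- products of simple reflections -/
def word (L : List (Fin S.l)) : E ≃ₗᵢ[ℝ] E := (L.map (fun i => S.refl (S.a i))).prod

@[simp] lemma word_nil : S.word [] = 1 := rfl

lemma word_cons (i : Fin S.l) (L : List (Fin S.l)) :
    S.word (i :: L) = S.refl (S.a i) * S.word L := by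
  simp [word]

lemma word_append (L L' : List (Fin S.l)) : S.word (L ++ L') = S.word L * S.word L' := by
  simp [word]

lemma word_maps (L : List (Fin S.l)) {γ : E} (hγ : γ ∈ S.Sig) : S.word L γ ∈ S.Sig := by
  induction L with
  | nil => simpa using hγ
  | cons i L ih =>
    rw [word_cons]
    exact S.hmaps _ (S.ha_mem i) _ ih

lemma word_inv (L : List (Fin S.l)) : (S.word L)⁻¹ = S.word L.reverse := by
  induction L with
  | nil => simp
  | cons i L ih =>
    rw [word_cons, mul_inv_rev, ih, List.reverse_cons, word_append]
    congr 1
    rw [S.refl_inv (S.ha_mem i)]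
    simp [word]


lemma exchange : ∀ (L : List (Fin S.l)) (i : Fin S.l),
    ¬ S.pos (S.word L (S.a i)) →
    ∃ L', S.word L' = S.word L * S.refl (S.a i) ∧ L'.length + 1 = L.length := by
  intro L
  induction L with
  | nil =>
    intro i h
    exact absurd (by simpa using S.simple_pos i) h
  | cons j L ih =>
    intro i h
    have happ : S.word (j :: L) (S.a i) = S.refl (S.a j) (S.word L (S.a i)) := by
      rw [word_cons]; rfl
    have hβSig : S.word L (S.a i) ∈ S.Sig := S.word_maps L (S.ha_mem i)
    by_cases hβ : S.pos (S.word L (S.a i))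
    · have h' : ¬ S.pos (S.refl (S.a j) (S.word L (S.a i))) := happ ▸ h
      obtain ⟨heq, hc0⟩ := S.propor_of_not_pos_refl hβ j h'
      have hpr : S.refl (S.word L (S.a i)) = S.refl (S.a j) :=
        S.refl_propor (S.ha_mem j) hβSig (Int.cast_ne_zero.mpr hc0) heq
      have hconj : S.refl (S.word L (S.a i))
          = S.word L * S.refl (S.a i) * (S.word L)⁻¹ :=
        S.refl_conj (S.ha_mem i) (S.word L) hβSig
      have key : S.refl (S.a j) = S.word L * S.refl (S.a i) * (S.word L)⁻¹ := by
        rw [← hpr, hconj]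
      refine ⟨L, ?_, by simp⟩
      have hgrp : ((S.word L * S.refl (S.a i) * (S.word L)⁻¹) * S.word L) * S.refl (S.a i)
          = S.word L * (S.refl (S.a i) * S.refl (S.a i)) := by group
      rw [word_cons, key, mul_assoc (S.word L * S.refl (S.a i) * (S.word L)⁻¹) (S.word L) (S.refl (S.a i)), ← mul_assoc,
        hgrp, S.refl_invol (S.ha_mem i), mul_one]
    · obtain ⟨L'', hw, hlen⟩ := ih i hβ
      refine ⟨j :: L'', ?_, by simpa using hlen⟩
      rw [word_cons, hw, word_cons, mul_assoc]

lemma word_eq_one : ∀ (n : ℕ) (L : List (Fin S.l)), L.length = n →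
    (∀ β, S.pos β → S.pos (S.word L β)) → S.word L = 1 := by
  intro n
  induction n using Nat.strong_induction_on with
  | _ n ih =>
    intro L hlen hP
    rcases List.eq_nil_or_concat L with rfl | ⟨L₀, i, rfl⟩
    · simp
    · have hword_i : S.word [i] = S.refl (S.a i) := by simp [word]
      have hw : S.word (L₀.concat i) = S.word L₀ * S.refl (S.a i) := by
        rw [List.concat_eq_append, word_append, hword_i]
      have h1 : S.pos (S.word (L₀.concat i) (S.a i)) := hP _ (S.simple_pos i)
      have hback : S.word L₀ = S.word (L₀.concat i) * S.refl (S.a i) := by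
        rw [hw, mul_assoc, S.refl_invol (S.ha_mem i), mul_one]
      have h2 : S.word L₀ (S.a i) = - (S.word (L₀.concat i)) (S.a i) := by
        rw [hback]
        show S.word (L₀.concat i) (S.refl (S.a i) (S.a i)) = _
        rw [S.refl_self (S.ha_mem i), map_neg]
      have h3 : ¬ S.pos (S.word L₀ (S.a i)) := by
        rw [h2]
        exact S.not_pos_neg h1
      obtain ⟨L', hw', hlen'⟩ := S.exchange L₀ i h3
      have heq : S.word L' = S.word (L₀.concat i) := by rw [hw', hw]
      have hlt : L'.length < n := by
        have hcl : (L₀.concat i).length = L₀.length + 1 := by simp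
        omega
      have hone := ih L'.length hlt L' rfl (by intro β hβ; rw [heq]; exact hP β hβ)
      rw [← heq, hone]

lemma exists_word_refl : ∀ (n : ℕ) (α : E), S.pos α → (∑ i, S.coeff α i).toNat = n →
    ∃ L : List (Fin S.l), S.word L = S.refl α := by
  intro n
  induction n using Nat.strong_induction_on with
  | _ n ih =>
    intro α hα hn
    have hαα : (0:ℝ) < ⟪α, α⟫ := S.inner_self_pos' α hα.1
    have hsum : ∑ i, (S.coeff α i : ℝ) * ⟪S.a i, α⟫ = ⟪α, α⟫ := by
      calc ∑ i, (S.coeff α i : ℝ) * ⟪S.a i, α⟫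
          = ∑ i, ⟪(S.coeff α i : ℝ) • S.a i, α⟫ := by
            refine Finset.sum_congr rfl (fun i _ => ?_)
            rw [real_inner_smul_left]
      _ = ⟪∑ i, (S.coeff α i : ℝ) • S.a i, α⟫ := (sum_inner Finset.univ (fun i => (S.coeff α i : ℝ) • S.a i) α).symm
      _ = ⟪α, α⟫ := by rw [← (S.hcoeff α hα.1).1]
    have hex : ∃ i, 0 < S.coeff α i ∧ 0 < ⟪α, S.a i⟫ := by
      by_contra hcon
      push_neg at hcon
      have hle : ∀ i ∈ Finset.univ, (S.coeff α i : ℝ) * ⟪S.a i, α⟫ ≤ 0 := by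
        intro i _
        rcases (hα.2 i).lt_or_eq with hci | hci
        · have h5 := hcon i hci
          have h6 : ⟪S.a i, α⟫ ≤ 0 := by rw [real_inner_comm]; exact h5
          have h7 : (0:ℝ) < (S.coeff α i : ℝ) := by exact_mod_cast hci
          exact mul_nonpos_of_nonneg_of_nonpos (le_of_lt h7) h6
        · rw [← hci]; simp
      have h8 := Finset.sum_nonpos hle
      rw [hsum] at h8
      linarith
    obtain ⟨i, hci, hip⟩ := hex
    obtain ⟨m, hm⟩ := S.hcrys (S.a i) (S.ha_mem i) α hα.1
    have hmpos : 0 < m := by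
      have h1 : (0:ℝ) < 2 * ⟪α, S.a i⟫ / ⟪S.a i, S.a i⟫ :=
        div_pos (by linarith) (S.inner_self_pos' _ (S.ha_mem i))
      rw [hm] at h1
      exact_mod_cast h1
    by_cases hp : S.pos (S.refl (S.a i) α)
    · have hc' := S.coeff_refl_simple hα.1 i hm
      have hsum' : ∑ j, S.coeff (S.refl (S.a i) α) j = (∑ j, S.coeff α j) - m := by
        rw [Finset.sum_congr rfl (fun j _ => hc' j), Finset.sum_sub_distrib]
        congr 1
        rw [Finset.sum_ite_eq Finset.univ i (fun _ => m), if_pos (Finset.mem_univ i)]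
      have h2 : 0 ≤ ∑ j, S.coeff α j := Finset.sum_nonneg (fun j _ => hα.2 j)
      have h3 : 0 ≤ ∑ j, S.coeff (S.refl (S.a i) α) j := Finset.sum_nonneg (fun j _ => hp.2 j)
      have hlt : (∑ j, S.coeff (S.refl (S.a i) α) j).toNat < n := by omega
      obtain ⟨L', hL'⟩ := ih _ hlt _ hp rfl
      have hints : S.refl (S.a i) (S.refl (S.a i) α) = α := by
        have h9 := congrArg (fun (g : E ≃ₗᵢ[ℝ] E) => g α) (S.refl_invol (S.ha_mem i))
        simpa using h9
      have hαmem' : S.refl (S.a i) (S.refl (S.a i) α) ∈ S.Sig := by rw [hints]; exact hα.1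
      have hconj := S.refl_conj (S.hmaps _ (S.ha_mem i) _ hα.1) (S.refl (S.a i)) hαmem'
      rw [hints] at hconj
      refine ⟨[i] ++ L' ++ [i], ?_⟩
      have hword_i : S.word [i] = S.refl (S.a i) := by simp [word]
      rw [word_append, word_append, hword_i, hL', hconj, S.refl_inv (S.ha_mem i)]
    · obtain ⟨heq, hc0⟩ := S.propor_of_not_pos_refl hα i hp
      refine ⟨[i], ?_⟩
      have hpr : S.refl α = S.refl (S.a i) :=
        S.refl_propor (S.ha_mem i) hα.1 (Int.cast_ne_zero.mpr hc0) heq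
      rw [hpr]
      simp [word]

lemma refl_word {α : E} (hα : α ∈ S.Sig) : ∃ L, S.word L = S.refl α := by
  rcases S.pos_or_neg hα with h | h
  · exact S.exists_word_refl _ α h rfl
  · obtain ⟨L, hL⟩ := S.exists_word_refl _ (-α) h rfl
    exact ⟨L, hL.trans (S.refl_propor hα (S.neg_mem hα) (c := (-1:ℝ)) (by norm_num) (by simp))⟩

lemma mem_word (W : Subgroup (E ≃ₗᵢ[ℝ] E))
    (hW : W = Subgroup.closure {g : E ≃ₗᵢ[ℝ] E | ∃ α ∈ S.Sig, g = S.refl α})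
    {s : E ≃ₗᵢ[ℝ] E} (hs : s ∈ W) : ∃ L, S.word L = s := by
  rw [hW] at hs
  induction hs using Subgroup.closure_induction with
  | mem x hx =>
    obtain ⟨α, hα, rfl⟩ := hx
    exact S.refl_word hα
  | one => exact ⟨[], rfl⟩
  | mul x y _ _ hx hy =>
    obtain ⟨L1, h1⟩ := hx
    obtain ⟨L2, h2⟩ := hy
    exact ⟨L1 ++ L2, by rw [word_append, h1, h2]⟩
  | inv x _ hx =>
    obtain ⟨L, hL⟩ := hx
    exact ⟨L.reverse, by rw [← word_inv, hL]⟩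

lemma exists_neg_root (W : Subgroup (E ≃ₗᵢ[ℝ] E))
    (hW : W = Subgroup.closure {g : E ≃ₗᵢ[ℝ] E | ∃ α ∈ S.Sig, g = S.refl α})
    {s : E ≃ₗᵢ[ℝ] E} (hs : s ∈ W) (hne1 : s ≠ 1) :
    ∃ β, S.pos β ∧ ¬ S.pos (s β) := by
  by_contra h
  push_neg at h
  obtain ⟨L, hL⟩ := S.mem_word W hW hs
  have := S.word_eq_one L.length L rfl (by intro β hβ; rw [hL]; exact h β hβ)
  rw [hL] at this
  exact hne1 this


/-- strict dominance: positive inner product with all positive roots -/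
def sdom (x : E) : Prop := ∀ β, S.pos β → 0 < ⟪β, x⟫

lemma sdom_inner_ne {x : E} (hx : S.sdom x) {γ : E} (hγ : γ ∈ S.Sig) : ⟪γ, x⟫ ≠ 0 := by
  rcases S.pos_or_neg hγ with h | h
  · exact ne_of_gt (hx γ h)
  · have h1 := hx _ h
    rw [inner_neg_left] at h1
    intro h0
    rw [h0] at h1
    norm_num at h1

lemma W_maps (W : Subgroup (E ≃ₗᵢ[ℝ] E))
    (hW : W = Subgroup.closure {g : E ≃ₗᵢ[ℝ] E | ∃ α ∈ S.Sig, g = S.refl α})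
    {s : E ≃ₗᵢ[ℝ] E} (hs : s ∈ W) {γ : E} (hγ : γ ∈ S.Sig) : s γ ∈ S.Sig := by
  obtain ⟨L, hL⟩ := S.mem_word W hW hs
  rw [← hL]
  exact S.word_maps L hγ

theorem main_lt (W : Subgroup (E ≃ₗᵢ[ℝ] E))
    (hW : W = Subgroup.closure {g : E ≃ₗᵢ[ℝ] E | ∃ α ∈ S.Sig, g = S.refl α})
    (F : Finset (E ≃ₗᵢ[ℝ] E)) (hF : ∀ g, g ∈ F ↔ g ∈ W)
    {x y : E} (hx : S.sdom x) (hy : S.sdom y) :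
    ∀ s, s ∈ W → s ≠ 1 → ⟪s x, y⟫ < ⟪x, y⟫ := by
  have h1F : (1 : E ≃ₗᵢ[ℝ] E) ∈ F := (hF 1).mpr (one_mem W)
  obtain ⟨s₀, hs₀F, hmax₀⟩ := F.exists_max_image (fun s => ⟪s x, y⟫) ⟨1, h1F⟩
  have claim : ∀ s ∈ F, (∀ t ∈ F, ⟪t x, y⟫ ≤ ⟪s x, y⟫) → s = 1 := by
    intro s hsF hmax
    have hsW : s ∈ W := (hF s).mp hsF
    have hdom : ∀ β, S.pos β → 0 ≤ ⟪β, s x⟫ := by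
      intro β hβ
      have hrW : S.refl β ∈ W := by
        rw [hW]; exact Subgroup.subset_closure ⟨β, hβ.1, rfl⟩
      have htW : S.refl β * s ∈ W := mul_mem hrW hsW
      have h2 := hmax _ ((hF _).mpr htW)
      have h3 : (S.refl β * s) x = s x - (2 * ⟪s x, β⟫ / ⟪β, β⟫) • β := by
        show S.refl β (s x) = _
        rw [S.hrefl β hβ.1]
      rw [h3, inner_sub_left, real_inner_smul_left] at h2
      have h5 : 0 < ⟪β, y⟫ := hy β hβ
      have hββ : 0 < ⟪β, β⟫ := S.inner_self_pos' β hβ.1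
      have h4 : 0 ≤ (2 * ⟪s x, β⟫ / ⟪β, β⟫) * ⟪β, y⟫ := by linarith
      have h6 : 0 ≤ 2 * ⟪s x, β⟫ / ⟪β, β⟫ := by
        by_contra h6
        push_neg at h6
        nlinarith
      have h7 : 0 ≤ 2 * ⟪s x, β⟫ := by
        have h7 := mul_nonneg h6 hββ.le
        rwa [div_mul_cancel₀ _ (ne_of_gt hββ)] at h7
      rw [real_inner_comm]
      linarith
    have hsx_sdom : S.sdom (s x) := by
      intro β hβ
      rcases (hdom β hβ).lt_or_eq with h | h
      · exact h
      · exfalso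
        have hcoe : ((s⁻¹ : E ≃ₗᵢ[ℝ] E) : E → E) = s.symm := rfl
        have h8 : ⟪β, s x⟫ = ⟪s⁻¹ β, x⟫ := by
          rw [hcoe]
          calc ⟪β, s x⟫ = ⟪s (s.symm β), s x⟫ := by rw [s.apply_symm_apply β]
          _ = ⟪s.symm β, x⟫ := s.inner_map_map _ _
        have hβSig' : s⁻¹ β ∈ S.Sig := S.W_maps W hW (inv_mem hsW) hβ.1
        exact S.sdom_inner_ne hx hβSig' (by rw [← h8, ← h])
    by_contra hne1
    obtain ⟨β, hβ, hnpos⟩ := S.exists_neg_root W hW hsW hne1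
    have hsβSig : s β ∈ S.Sig := S.W_maps W hW hsW hβ.1
    have hneg : S.pos (-(s β)) := (S.pos_or_neg hsβSig).resolve_left hnpos
    have h9 : 0 < ⟪-(s β), s x⟫ := hsx_sdom _ hneg
    have h10 : ⟪s β, s x⟫ = ⟪β, x⟫ := s.inner_map_map β x
    have h11 : 0 < ⟪β, x⟫ := hx β hβ
    rw [inner_neg_left, h10] at h9
    linarith
  intro s hsW hne1
  have hsF := (hF s).mpr hsW
  have h1 : ⟪s x, y⟫ ≤ ⟪s₀ x, y⟫ := hmax₀ s hsF
  have hs₀1 : s₀ = 1 := claim s₀ hs₀F hmax₀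
  rw [hs₀1] at h1
  rw [show ((1 : E ≃ₗᵢ[ℝ] E) x) = x from rfl] at h1
  rcases h1.lt_or_eq with h | h
  · exact h
  · exfalso
    apply hne1
    refine claim s hsF (fun t ht => ?_)
    have := hmax₀ t ht
    rw [hs₀1, show ((1 : E ≃ₗᵢ[ℝ] E) x) = x from rfl] at this
    rw [h]
    exact this

theorem inner_pos (W : Subgroup (E ≃ₗᵢ[ℝ] E))
    (hW : W = Subgroup.closure {g : E ≃ₗᵢ[ℝ] E | ∃ α ∈ S.Sig, g = S.refl α})
    (F : Finset (E ≃ₗᵢ[ℝ] E)) (hF : ∀ g, g ∈ F ↔ g ∈ W)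
    (hSig_ne : S.Sig.Nonempty) {x y : E} (hx : S.sdom x) (hy : S.sdom y) : 0 < ⟪x, y⟫ := by
  set v := ∑ s ∈ F, s x with hv
  have hreindex : ∀ r : E ≃ₗᵢ[ℝ] E, r ∈ W → ∑ s ∈ F, (r * s) x = ∑ s ∈ F, s x := by
    intro r hr
    refine Finset.sum_equiv (Equiv.mulLeft r) (fun i => ?_) (fun i _ => rfl)
    constructor
    · intro hi
      exact (hF _).mpr (mul_mem hr ((hF _).mp hi))
    · intro hi
      have h2 : r * i ∈ W := (hF _).mp (by simpa using hi)
      have h3 : r⁻¹ * (r * i) ∈ W := mul_mem (inv_mem hr) h2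
      rw [inv_mul_cancel_left] at h3
      exact (hF _).mpr h3
  have hinv : ∀ α ∈ S.Sig, S.refl α v = v := by
    intro α hα
    have hrW : S.refl α ∈ W := by
      rw [hW]; exact Subgroup.subset_closure ⟨α, hα, rfl⟩
    calc S.refl α v = ∑ s ∈ F, S.refl α (s x) := by rw [hv, map_sum]
    _ = ∑ s ∈ F, (S.refl α * s) x := rfl
    _ = v := hreindex _ hrW
  have hvα : ∀ α ∈ S.Sig, ⟪v, α⟫ = 0 := by
    intro α hα
    have h1 := hinv α hα
    rw [S.hrefl α hα v, sub_eq_self] at h1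
    rcases smul_eq_zero.mp h1 with h2 | h2
    · rcases div_eq_zero_iff.mp h2 with h3 | h3
      · linarith
      · exact absurd h3 (S.inner_self_ne α hα)
    · exact absurd h2 (S.hne α hα)
  have hv0 : v = 0 := by
    have hmem : v ∈ (Submodule.span ℝ (S.Sig : Set E))ᗮ := by
      rw [Submodule.mem_orthogonal]
      intro u hu
      induction hu using Submodule.span_induction with
      | mem z hz => rw [real_inner_comm]; exact hvα z hz
      | zero => simp
      | add z w _ _ hz hw => rw [inner_add_left, hz, hw]; norm_num
      | smul c z _ hz => rw [inner_smul_left, hz]; norm_num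
    rw [S.hspan, Submodule.top_orthogonal_eq_bot] at hmem
    simpa using hmem
  have hsum0 : ∑ s ∈ F, ⟪s x, y⟫ = 0 := by
    rw [← sum_inner, ← hv, hv0, inner_zero_left]
  obtain ⟨α, hαSig⟩ := hSig_ne
  have hrW : S.refl α ∈ W := by
    rw [hW]; exact Subgroup.subset_closure ⟨α, hαSig, rfl⟩
  have hrne : S.refl α ≠ 1 := by
    intro h
    have h2 : S.refl α α = α := by rw [h]; rfl
    rw [S.refl_self hαSig] at h2
    apply S.hne α hαSig
    have h3 : (2:ℝ) • α = 0 := by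
      have : α + α = 0 := by nth_rewrite 1 [← h2]; abel
      rw [two_smul]
      exact this
    rcases smul_eq_zero.mp h3 with h4 | h4
    · norm_num at h4
    · exact h4
  have h1F : (1 : E ≃ₗᵢ[ℝ] E) ∈ F := (hF 1).mpr (one_mem W)
  have hle : ∀ s ∈ F, ⟪s x, y⟫ ≤ ⟪x, y⟫ := by
    intro s hs
    by_cases h : s = 1
    · rw [h]
      exact le_of_eq rfl
    · exact le_of_lt (S.main_lt W hW F hF hx hy s ((hF s).mp hs) h)
  have hlt := Finset.sum_lt_sum hle ⟨S.refl α, (hF _).mpr hrW,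
    S.main_lt W hW F hF hx hy _ hrW hrne⟩
  rw [hsum0, Finset.sum_const] at hlt
  have hcard : 0 < F.card := Finset.card_pos.mpr ⟨1, h1F⟩
  rw [nsmul_eq_mul] at hlt
  have hcast : (0:ℝ) ≤ (F.card : ℝ) := Nat.cast_nonneg _
  nlinarith [hlt, hcast]

end RSData


/-- The regular case of Lemma 3 of the paper: if `Σ ≠ ∅` and `-A_η` lies in the open
positive Weyl chamber, then for every `H₀` in the open positive Weyl chamber the function
`t ↦ Σ_{s ∈ W} det(s) exp(i t ⟪s A_ξ, H₀⟫ - t ⟪s A_η, H₀⟫)` is unbounded on `(0, ∞)`. -/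
theorem regular_case_unbounded
    {E : Type*} [NormedAddCommGroup E] [InnerProductSpace ℝ E] [FiniteDimensional ℝ E]
    -- the root system `Σ`
    (Sig : Finset E)
    (hSig_ne : ∀ α ∈ Sig, α ≠ (0 : E))
    (hSig_span : Submodule.span ℝ (Sig : Set E) = ⊤)
    -- the reflections `s_α(x) = x - (2⟪x,α⟫/⟪α,α⟫) α`
    (refl : E → (E ≃ₗᵢ[ℝ] E))
    (hrefl : ∀ α ∈ Sig, ∀ x : E, refl α x = x - (2 * ⟪x, α⟫ / ⟪α, α⟫) • α)
    (hrefl_maps : ∀ α ∈ Sig, ∀ β ∈ Sig, refl α β ∈ Sig)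
    (hcrys : ∀ α ∈ Sig, ∀ β ∈ Sig, ∃ m : ℤ, 2 * ⟪β, α⟫ / ⟪α, α⟫ = (m : ℝ))
    -- the Weyl group `W`
    (W : Subgroup (E ≃ₗᵢ[ℝ] E))
    (hW : W = Subgroup.closure {g : E ≃ₗᵢ[ℝ] E | ∃ α ∈ Sig, g = refl α})
    -- the simple roots `α₁, …, α_ℓ`
    {l : ℕ} (a : Fin l → E)
    (ha_mem : ∀ i, a i ∈ Sig)
    (ha_indep : LinearIndependent ℝ a)
    (ha_span : Submodule.span ℝ (Set.range a) = ⊤)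
    -- integer coefficients of roots w.r.t. the simple roots, all `≥ 0` or all `≤ 0`
    (coeff : E → Fin l → ℤ)
    (hcoeff : ∀ α ∈ Sig, α = ∑ i, (coeff α i : ℝ) • a i ∧
        ((∀ i, 0 ≤ coeff α i) ∨ (∀ i, coeff α i ≤ 0)))
    -- the positive roots `Σ⁺`
    (Sigplus : Finset E)
    (hSigplus : ∀ α : E, α ∈ Sigplus ↔ α ∈ Sig ∧ ∀ i, 0 ≤ coeff α i)
    (hSig_nonempty : Sig.Nonempty)
    (hW_fin : (W : Set (E ≃ₗᵢ[ℝ] E)).Finite)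
    (Aξ Aη : E)
    (hη : ∀ α ∈ Sigplus, 0 < ⟪α, -Aη⟫) :
    ∀ H₀ : E, (∀ α ∈ Sigplus, 0 < ⟪α, H₀⟫) →
      ∀ C : ℝ, ∃ t : ℝ, 0 < t ∧ C <
        ‖∑ s ∈ hW_fin.toFinset,
            ((LinearMap.det (s.toLinearEquiv : E →ₗ[ℝ] E) : ℝ) : ℂ) *
              Complex.exp (Complex.I * ((t * ⟪s Aξ, H₀⟫ : ℝ) : ℂ) - ((t * ⟪s Aη, H₀⟫ : ℝ) : ℂ))‖ := by
  intro H₀ hH₀ C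
  classical
  set S : RSData E := ⟨Sig, hSig_ne, hSig_span, refl, hrefl, hrefl_maps, hcrys, l, a,
    ha_mem, ha_indep, coeff, hcoeff⟩ with hS
  set F : Finset (E ≃ₗᵢ[ℝ] E) := hW_fin.toFinset with hFdef
  have hF : ∀ g, g ∈ F ↔ g ∈ W := fun g => hW_fin.mem_toFinset
  have hx : S.sdom (-Aη) := fun β hβ => hη β ((hSigplus β).mpr ⟨hβ.1, hβ.2⟩)
  have hy : S.sdom H₀ := fun β hβ => hH₀ β ((hSigplus β).mpr ⟨hβ.1, hβ.2⟩)
  set c : (E ≃ₗᵢ[ℝ] E) → ℝ := fun s => -⟪s Aη, H₀⟫ with hc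
  have hcs : ∀ s : E ≃ₗᵢ[ℝ] E, ⟪s (-Aη), H₀⟫ = c s := by
    intro s
    rw [hc, map_neg, inner_neg_left]
  have hc1 : (⟪-Aη, H₀⟫ : ℝ) = c 1 := by
    show (⟪-Aη, H₀⟫ : ℝ) = -⟪(1 : E ≃ₗᵢ[ℝ] E) Aη, H₀⟫
    rw [show ((1 : E ≃ₗᵢ[ℝ] E) Aη) = Aη from rfl, inner_neg_left]
  have key1 : ∀ s ∈ W, s ≠ 1 → c s < c 1 := by
    intro s hs hne
    have := S.main_lt W hW F hF hx hy s hs hne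
    rwa [hcs s, hc1] at this
  have key2 : 0 < c 1 := by
    have := S.inner_pos W hW F hF hSig_nonempty hx hy
    rwa [hc1] at this
  set D : (E ≃ₗᵢ[ℝ] E) → ℝ := fun s => (LinearMap.det (s.toLinearEquiv : E →ₗ[ℝ] E) : ℝ)
    with hD
  have hD1 : D 1 = 1 := by
    show (LinearMap.det ((1 : E ≃ₗᵢ[ℝ] E).toLinearEquiv : E →ₗ[ℝ] E) : ℝ) = 1
    rw [show ((1 : E ≃ₗᵢ[ℝ] E).toLinearEquiv : E →ₗ[ℝ] E) = LinearMap.id from rfl,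
      LinearMap.det_id]
  have h1F : (1 : E ≃ₗᵢ[ℝ] E) ∈ F := (hF 1).mpr (one_mem W)
  -- the lower bound function
  set g : ℝ → ℝ := fun t =>
    Real.exp (t * c 1) - ∑ s ∈ F.erase 1, |D s| * Real.exp (t * c s) with hg
  have hgto : Tendsto g atTop atTop := by
    have hrw : ∀ t : ℝ, g t
        = Real.exp (t * c 1) * (1 - ∑ s ∈ F.erase 1, |D s| * Real.exp (t * (c s - c 1))) := by
      intro t
      rw [hg]
      simp only [mul_sub, mul_one, Finset.mul_sum]
      congr 1
      refine Finset.sum_congr rfl (fun s hs => ?_)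
      rw [show t * c s = t * c 1 + t * (c s - c 1) by ring, Real.exp_add]
      ring
    rw [show g = fun t => Real.exp (t * c 1) *
        (1 - ∑ s ∈ F.erase 1, |D s| * Real.exp (t * (c s - c 1))) from funext hrw]
    have hexp1 : Tendsto (fun t : ℝ => Real.exp (t * c 1)) atTop atTop := by
      apply Real.tendsto_exp_atTop.comp
      exact Tendsto.atTop_mul_const key2 tendsto_id
    have hsum : Tendsto (fun t : ℝ => ∑ s ∈ F.erase 1, |D s| * Real.exp (t * (c s - c 1)))
        atTop (nhds 0) := by
      have h0 : (0:ℝ) = ∑ s ∈ F.erase 1, (0:ℝ) := by simp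
      rw [h0]
      apply tendsto_finset_sum
      intro s hs
      have hsW : s ∈ W := (hF s).mp (Finset.mem_of_mem_erase hs)
      have hsne : s ≠ 1 := Finset.ne_of_mem_erase hs
      have hneg : c s - c 1 < 0 := sub_neg.mpr (key1 s hsW hsne)
      have : Tendsto (fun t : ℝ => Real.exp (t * (c s - c 1))) atTop (nhds 0) := by
        apply Real.tendsto_exp_atBot.comp
        exact Tendsto.atTop_mul_const_of_neg hneg tendsto_id
      have h2 := this.const_mul |D s|
      simpa using h2
    have hone : Tendsto (fun t : ℝ =>
        1 - ∑ s ∈ F.erase 1, |D s| * Real.exp (t * (c s - c 1))) atTop (nhds 1) := by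
      have := (tendsto_const_nhds (x := (1:ℝ)) (f := atTop)).sub hsum
      simpa using this
    exact hexp1.atTop_mul_pos one_pos hone
  -- pointwise lower bound
  have hbound : ∀ t : ℝ, g t ≤
      ‖∑ s ∈ F, ((D s : ℝ) : ℂ) *
        Complex.exp (Complex.I * ((t * ⟪s Aξ, H₀⟫ : ℝ) : ℂ) - ((t * ⟪s Aη, H₀⟫ : ℝ) : ℂ))‖ := by
    intro t
    set term : (E ≃ₗᵢ[ℝ] E) → ℂ := fun s => ((D s : ℝ) : ℂ) *
      Complex.exp (Complex.I * ((t * ⟪s Aξ, H₀⟫ : ℝ) : ℂ) - ((t * ⟪s Aη, H₀⟫ : ℝ) : ℂ))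
      with hterm
    have hnorm : ∀ s : E ≃ₗᵢ[ℝ] E, ‖term s‖ = |D s| * Real.exp (t * c s) := by
      intro s
      simp only [hterm]
      rw [norm_mul, Complex.norm_real, Real.norm_eq_abs, Complex.norm_exp]
      congr 1
      have hre : (Complex.I * ((t * ⟪s Aξ, H₀⟫ : ℝ) : ℂ) - ((t * ⟪s Aη, H₀⟫ : ℝ) : ℂ)).re
          = t * c s := by
        simp only [Complex.sub_re, Complex.mul_re, Complex.I_re, Complex.I_im,
          Complex.ofReal_re, Complex.ofReal_im, hc]
        ring
      rw [hre]
    have hsplit : ∑ s ∈ F, term s = term 1 + ∑ s ∈ F.erase 1, term s :=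
      (Finset.add_sum_erase F term h1F).symm
    have htriangle : ‖term 1‖ - ‖∑ s ∈ F.erase 1, term s‖ ≤ ‖∑ s ∈ F, term s‖ := by
      have h2 : ‖term 1‖ ≤ ‖∑ s ∈ F, term s‖ + ‖∑ s ∈ F.erase 1, term s‖ := by
        calc ‖term 1‖ = ‖(∑ s ∈ F, term s) + (-(∑ s ∈ F.erase 1, term s))‖ := by
              rw [hsplit]; ring_nf
        _ ≤ ‖∑ s ∈ F, term s‖ + ‖-(∑ s ∈ F.erase 1, term s)‖ := norm_add_le _ _
        _ = ‖∑ s ∈ F, term s‖ + ‖∑ s ∈ F.erase 1, term s‖ := by rw [norm_neg]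
      linarith
    have hrest : ‖∑ s ∈ F.erase 1, term s‖ ≤ ∑ s ∈ F.erase 1, |D s| * Real.exp (t * c s) := by
      calc ‖∑ s ∈ F.erase 1, term s‖ ≤ ∑ s ∈ F.erase 1, ‖term s‖ := norm_sum_le _ _
      _ = ∑ s ∈ F.erase 1, |D s| * Real.exp (t * c s) :=
          Finset.sum_congr rfl (fun s _ => hnorm s)
    have hmain : ‖term 1‖ = Real.exp (t * c 1) := by
      rw [hnorm 1, hD1]
      norm_num
    rw [hg]
    calc Real.exp (t * c 1) - ∑ s ∈ F.erase 1, |D s| * Real.exp (t * c s)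
        ≤ ‖term 1‖ - ‖∑ s ∈ F.erase 1, term s‖ := by
          rw [hmain]
          linarith
    _ ≤ ‖∑ s ∈ F, term s‖ := htriangle
  -- conclude
  have hev : ∀ᶠ t : ℝ in atTop, C < g t := hgto.eventually_gt_atTop C
  have hev2 : ∀ᶠ t : ℝ in atTop, (0:ℝ) < t := eventually_gt_atTop 0
  obtain ⟨t, ht0, htC⟩ := (hev2.and hev).exists
  exact ⟨t, ht0, lt_of_lt_of_le htC (hbound t)⟩
end

section
/- Let b be a positive real number, let k₁, …, kₙ be pairwise distinct real numbers, and let Q₁, …, Qₙ be polynomials with complex coefficients, not all zero. Further let R₁, …, R_m be polynomials with complex coefficients and c₁, …, c_m complex numbers with real part Re(c_j) < b for each j. Then the function t ↦ e^{b t} · Σ_{r=1}^{n} Q_r(t) e^{i k_r t} + Σ_{j=1}^{m} R_j(t) e^{c_j t} is unbounded on (0, ∞). (This packages the final step of the paper's proof of Lemma 3: the bracketed sum over V/U, multiplied by the dominant real exponential e^{⟨H′,H₀⟩ t}, outweighs all the terms coming from s ∉ V.) -/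
open Filter Topology Polynomial

lemma pow_mul_exp_tendsto {a : ℝ} (ha : a < 0) (n : ℕ) :
    Tendsto (fun t : ℝ => t ^ n * Real.exp (a * t)) atTop (𝓝 0) := by
  have h1 : Tendsto (fun t : ℝ => (-a) * t) atTop atTop :=
    Tendsto.const_mul_atTop (by linarith) tendsto_id
  have h2 := (Real.tendsto_pow_mul_exp_neg_atTop_nhds_zero n).comp h1
  have h3 := h2.const_mul ((-a)⁻¹ ^ n)
  rw [mul_zero] at h3
  refine h3.congr fun t => ?_
  have hane : (-a) ≠ 0 := by linarith
  simp only [Function.comp_apply, mul_pow]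
  rw [← mul_assoc, ← mul_assoc, ← mul_pow, inv_mul_cancel₀ hane, one_pow, one_mul,
    neg_mul, neg_neg]

lemma poly_decay (P : Polynomial ℂ) (a : ℂ) (ha : a.re < 0) :
    Tendsto (fun t : ℝ => P.eval (t : ℂ) * Complex.exp (a * t)) atTop (𝓝 0) := by
  induction P using Polynomial.induction_on' with
  | add p q hp hq => simpa [add_mul] using hp.add hq
  | monomial n c =>
    rw [tendsto_zero_iff_norm_tendsto_zero]
    have key := (pow_mul_exp_tendsto ha n).const_mul ‖c‖
    rw [mul_zero] at key
    apply key.congr'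
    filter_upwards [eventually_ge_atTop (0:ℝ)] with t ht
    rw [eval_monomial, norm_mul, norm_mul,
      Complex.norm_exp]
    have : (a * (t:ℂ)).re = a.re * t := by simp [Complex.mul_re]
    rw [this, norm_pow, Complex.norm_real, Real.norm_of_nonneg ht]
    ring


lemma natDegree_eq_zero_of_comp_eq (P : Polynomial ℂ) (h : P.comp (X + C 1) = P) :
    P.natDegree = 0 := by
  have heval : ∀ x : ℂ, P.eval (x + 1) = P.eval x := by
    intro x
    conv_rhs => rw [← h]
    simp [eval_comp]
  have hnat : ∀ N : ℕ, P.eval (N : ℂ) = P.eval 0 := by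
    intro N
    induction N with
    | zero => simp
    | succ N ih => rw [Nat.cast_succ, heval, ih]
  have hzero : P - C (P.eval 0) = 0 := by
    apply Polynomial.eq_zero_of_infinite_isRoot
    apply Set.infinite_of_injective_forall_mem (f := fun N : ℕ => (N : ℂ))
    · exact fun a b hab => Nat.cast_injective hab
    · intro N
      simp [Polynomial.IsRoot, hnat N]
  have : P = C (P.eval 0) := by linear_combination (norm := ring_nf) hzero
  rw [this, natDegree_C]

lemma discrete_key {ι : Type*} [DecidableEq ι] (D : ℕ) :
    ∀ (s : Finset ι) (z : ι → ℂ) (P : ι → Polynomial ℂ),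
    (∑ i ∈ s, ((P i).natDegree + 1)) ≤ D →
    Set.InjOn z s →
    (∀ i ∈ s, ‖z i‖ = 1) →
    (∀ i ∈ s, P i ≠ 0) →
    Tendsto (fun N : ℕ => ∑ i ∈ s, (P i).eval (N : ℂ) * z i ^ N) atTop (𝓝 0) →
    s = ∅ := by
  induction D with
  | zero =>
    intro s z P hD _ _ _
    intro _
    by_contra hne
    obtain ⟨w, hw⟩ := Finset.nonempty_iff_ne_empty.mpr hne
    have : 1 ≤ ∑ i ∈ s, ((P i).natDegree + 1) :=
      le_trans (Nat.le_add_left 1 (P w).natDegree)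
        (Finset.single_le_sum (f := fun i => (P i).natDegree + 1) (fun i _ => Nat.zero_le _) hw)
    omega
  | succ D ih =>
    intro s z P hD hinj hz h0 hlim
    by_contra hne
    obtain ⟨w, hw⟩ := Finset.nonempty_iff_ne_empty.mpr hne
    set P' : ι → Polynomial ℂ := fun i => z i • (P i).comp (X + C 1) - z w • P i with hP'def
    -- the shifted sum also tends to 0
    have hb : Tendsto (fun N : ℕ => ∑ i ∈ s, (P' i).eval (N : ℂ) * z i ^ N) atTop (𝓝 0) := by
    
      have h1 : Tendsto (fun N : ℕ =>
          (∑ i ∈ s, (P i).eval ((N + 1 : ℕ) : ℂ) * z i ^ (N + 1)) -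
          z w * ∑ i ∈ s, (P i).eval (N : ℂ) * z i ^ N) atTop (𝓝 0) := by
        simpa using ((hlim.comp (tendsto_add_atTop_nat 1)).sub (hlim.const_mul (z w)))
      refine h1.congr fun N => ?_
      rw [Finset.mul_sum, ← Finset.sum_sub_distrib]
      refine Finset.sum_congr rfl fun i his => ?_
      simp only [hP'def, eval_sub, eval_smul, eval_comp, eval_add, eval_X, eval_C, smul_eq_mul]
      push_cast
      ring
    -- degree bounds for i ≠ w and nonvanishing
    have hdeg : ∀ i ∈ s, (P' i).natDegree ≤ (P i).natDegree := by
      intro i his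
      apply natDegree_sub_le _ _ |>.trans
      apply max_le
      · exact (natDegree_smul_le _ _).trans (by
          rw [natDegree_comp, natDegree_X_add_C, mul_one])
      · exact natDegree_smul_le _ _
    have hcoeff : ∀ i ∈ s, (P' i).coeff (P i).natDegree = (z i - z w) * (P i).leadingCoeff := by
      intro i his
      have hcomp : ((P i).comp (X + C 1)).natDegree = (P i).natDegree := by
        rw [natDegree_comp, natDegree_X_add_C, mul_one]
      have hlc : ((P i).comp (X + C 1)).leadingCoeff = (P i).leadingCoeff := by
        rcases Nat.eq_zero_or_pos (P i).natDegree with h | h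
        · obtain ⟨a, ha⟩ := natDegree_eq_zero.mp h
          rw [← ha]; simp
        · rw [leadingCoeff_comp (by rw [natDegree_X_add_C]; exact one_ne_zero)]
          have : (X + C (1:ℂ)).leadingCoeff = 1 := leadingCoeff_X_add_C 1
          rw [this, one_pow, mul_one]
      simp only [hP'def, coeff_sub, coeff_smul, smul_eq_mul]
      rw [← hcomp, coeff_natDegree, hcomp, coeff_natDegree, hlc]
      ring
    have hne' : ∀ i ∈ s, i ≠ w → P' i ≠ 0 := by
      intro i his hiw hcontra
      have := hcoeff i his
      rw [hcontra, coeff_zero] at this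
      have hzz : z i - z w ≠ 0 := sub_ne_zero.mpr (fun h => hiw (hinj his hw h))
      have := (mul_eq_zero.mp this.symm).resolve_left hzz
      exact h0 i his (leadingCoeff_eq_zero.mp this)
    by_cases hd : (P w).natDegree = 0
    · -- P w is a nonzero constant; P' w = 0
      obtain ⟨cc, hcc⟩ := natDegree_eq_zero.mp hd
      have hPw0 : P' w = 0 := by
        simp [hP'def, ← hcc, sub_self]
      have hsum_erase : ∀ N : ℕ, ∑ i ∈ s.erase w, (P' i).eval (N : ℂ) * z i ^ N
          = ∑ i ∈ s, (P' i).eval (N : ℂ) * z i ^ N := by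
        intro N
        apply Finset.sum_erase
        rw [hPw0]; simp
      have hmeas : ∑ i ∈ s.erase w, ((P' i).natDegree + 1) ≤ D := by
        have h2 : ∑ i ∈ s.erase w, ((P' i).natDegree + 1)
            ≤ ∑ i ∈ s.erase w, ((P i).natDegree + 1) :=
          Finset.sum_le_sum fun i hi => by
            have := hdeg i (Finset.mem_of_mem_erase hi); omega
        have h3 : ((P w).natDegree + 1) + ∑ i ∈ s.erase w, ((P i).natDegree + 1)
            = ∑ i ∈ s, ((P i).natDegree + 1) :=
          Finset.add_sum_erase s (fun i => (P i).natDegree + 1) hw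
        omega
      have herase : s.erase w = ∅ := by
        apply ih (s.erase w) z P' hmeas (hinj.mono (by simp [Finset.coe_erase, Set.diff_subset]))
          (fun i hi => hz i (Finset.mem_of_mem_erase hi))
          (fun i hi => hne' i (Finset.mem_of_mem_erase hi) (Finset.ne_of_mem_erase hi))
        exact hb.congr fun N => (hsum_erase N).symm
      -- so s = {w}
      have hsw : s = {w} := by
        apply Finset.eq_singleton_iff_unique_mem.mpr
        refine ⟨hw, fun x hx => ?_⟩
        by_contra hxw
        have : x ∈ s.erase w := Finset.mem_erase.mpr ⟨hxw, hx⟩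
        rw [herase] at this; exact absurd this (Finset.notMem_empty x)
      rw [hsw] at hlim
      simp only [Finset.sum_singleton, ← hcc, eval_C] at hlim
      have hnorm : Tendsto (fun N : ℕ => ‖cc * z w ^ N‖) atTop (𝓝 0) :=
        tendsto_zero_iff_norm_tendsto_zero.mp hlim
      have : ∀ N : ℕ, ‖cc * z w ^ N‖ = ‖cc‖ := by
        intro N; rw [norm_mul, norm_pow, hz w hw, one_pow, mul_one]
      rw [show (fun N : ℕ => ‖cc * z w ^ N‖) = fun _ => ‖cc‖ from funext this] at hnorm
      have : ‖cc‖ = 0 := tendsto_nhds_unique tendsto_const_nhds hnorm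
      have : cc = 0 := norm_eq_zero.mp this
      exact h0 w hw (by rw [← hcc, this, map_zero])
    · -- natDegree (P w) ≥ 1 : degree strictly drops at w
      have hq' : (P w).comp (X + C 1) - P w ≠ 0 := by
        intro hcontra
        exact hd (natDegree_eq_zero_of_comp_eq (P w) (by linear_combination (norm := ring_nf) hcontra))
      have hq0 : P w ≠ 0 := h0 w hw
      have hcompnat : ((P w).comp (X + C 1)).natDegree = (P w).natDegree := by
        rw [natDegree_comp, natDegree_X_add_C, mul_one]
      have hlcw : ((P w).comp (X + C 1)).leadingCoeff = (P w).leadingCoeff := by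
        rw [leadingCoeff_comp (by rw [natDegree_X_add_C]; exact one_ne_zero)]
        have : (X + C (1:ℂ)).leadingCoeff = 1 := leadingCoeff_X_add_C 1
        rw [this, one_pow, mul_one]
      have hcompne : ((P w).comp (X + C 1)) ≠ 0 := by
        intro hcontra
        apply hq0
        rw [← leadingCoeff_eq_zero, ← hlcw, hcontra, leadingCoeff_zero]
      have hdegeq : ((P w).comp (X + C 1)).degree = (P w).degree := by
        rw [degree_eq_natDegree hcompne, degree_eq_natDegree hq0, hcompnat]
      have hdeglt : ((P w).comp (X + C 1) - P w).degree < (P w).degree := by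
        have := degree_sub_lt hdegeq hcompne hlcw
        rwa [hdegeq] at this
      have hndlt : ((P w).comp (X + C 1) - P w).natDegree < (P w).natDegree :=
        natDegree_lt_natDegree hq' hdeglt
      have hPw : P' w = z w • ((P w).comp (X + C 1) - P w) := by
        simp [hP'def, smul_sub]
      have hzw0 : z w ≠ 0 := by
        intro hc
        have := hz w hw
        rw [hc, norm_zero] at this
        norm_num at this
      have hPwne : P' w ≠ 0 := by
        rw [hPw]
        exact smul_ne_zero hzw0 hq'
      have hPwdeg : (P' w).natDegree < (P w).natDegree := by
        rw [hPw]
        exact lt_of_le_of_lt (natDegree_smul_le _ _) hndlt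
      have hmeas : ∑ i ∈ s, ((P' i).natDegree + 1) ≤ D := by
        have h2 : ∑ i ∈ s.erase w, ((P' i).natDegree + 1)
            ≤ ∑ i ∈ s.erase w, ((P i).natDegree + 1) :=
          Finset.sum_le_sum fun i hi => by
            have := hdeg i (Finset.mem_of_mem_erase hi); omega
        have h3 : ((P w).natDegree + 1) + ∑ i ∈ s.erase w, ((P i).natDegree + 1)
            = ∑ i ∈ s, ((P i).natDegree + 1) :=
          Finset.add_sum_erase s (fun i => (P i).natDegree + 1) hw
        have h4 : ((P' w).natDegree + 1) + ∑ i ∈ s.erase w, ((P' i).natDegree + 1)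
            = ∑ i ∈ s, ((P' i).natDegree + 1) :=
          Finset.add_sum_erase s (fun i => (P' i).natDegree + 1) hw
        omega
      have : s = ∅ := by
        apply ih s z P' hmeas hinj hz ?_ hb
        intro i his
        rcases eq_or_ne i w with rfl | hiw
        · exact hPwne
        · exact hne' i his hiw
      rw [this] at hw
      exact absurd hw (Finset.notMem_empty w)


/-- The final step of the paper's proof of Lemma 3: if `b > 0`, `k₁, …, kₙ` are pairwise
distinct reals, `Q₁, …, Qₙ` are complex polynomials not all zero, and `R₁, …, R_m` are
complex polynomials with exponents `c_j` of real part `< b`, then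
`t ↦ e^{bt} Σ_r Q_r(t) e^{i k_r t} + Σ_j R_j(t) e^{c_j t}` is unbounded on `(0, ∞)`. -/
theorem dominant_exponential_unbounded
    (b : ℝ) (hb : 0 < b)
    {n m : ℕ} (k : Fin n → ℝ) (hk : Function.Injective k)
    (Q : Fin n → Polynomial ℂ) (hQ : ∃ r, Q r ≠ 0)
    (R : Fin m → Polynomial ℂ) (c : Fin m → ℂ) (hc : ∀ j, (c j).re < b) :
    ∀ C : ℝ, ∃ t : ℝ, 0 < t ∧ C <
      ‖Complex.exp ((b : ℂ) * t) * ∑ r, (Q r).eval (t : ℂ) * Complex.exp (Complex.I * (k r * t)) +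
        ∑ j, (R j).eval (t : ℂ) * Complex.exp (c j * t)‖ := by
  by_contra hcon
  push_neg at hcon
  obtain ⟨B, hC⟩ := hcon
  set F : ℝ → ℂ := fun t =>
      Complex.exp ((b : ℂ) * t) * ∑ r, (Q r).eval (t : ℂ) * Complex.exp (Complex.I * (k r * t)) +
        ∑ j, (R j).eval (t : ℂ) * Complex.exp (c j * t) with hFdef
  set S : ℝ → ℂ := fun t => ∑ r, (Q r).eval (t : ℂ) * Complex.exp (Complex.I * (k r * t))
    with hSdef
  set T : ℝ → ℂ := fun t => ∑ j, (R j).eval (t : ℂ) * Complex.exp (c j * t) with hTdef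
  -- Step 1 : T decays after multiplication by exp(-bt)
  have hT : Tendsto (fun t : ℝ => T t * Complex.exp (-(b:ℂ) * t)) atTop (𝓝 0) := by
    have : ∀ t : ℝ, T t * Complex.exp (-(b:ℂ) * t)
        = ∑ j, (R j).eval (t : ℂ) * Complex.exp ((c j - b) * t) := by
      intro t
      rw [hTdef, Finset.sum_mul]
      refine Finset.sum_congr rfl fun j _ => ?_
      rw [mul_assoc, ← Complex.exp_add]
      ring_nf
    rw [show (fun t : ℝ => T t * Complex.exp (-(b:ℂ) * t)) =
      fun t : ℝ => ∑ j, (R j).eval (t : ℂ) * Complex.exp ((c j - b) * t) from funext this]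
    have h0 : (0 : ℂ) = ∑ _j : Fin m, (0 : ℂ) := by simp
    rw [h0]
    apply tendsto_finset_sum
    intro j _
    apply poly_decay
    simp only [Complex.sub_re, Complex.ofReal_re]
    linarith [hc j]
  -- Step 2 : F * exp(-bt) tends to 0
  have hF : Tendsto (fun t : ℝ => F t * Complex.exp (-(b:ℂ) * t)) atTop (𝓝 0) := by
    rw [tendsto_zero_iff_norm_tendsto_zero]
    have hg : Tendsto (fun t : ℝ => max B 0 * (t ^ 0 * Real.exp (-b * t))) atTop (𝓝 0) := by
      have := (pow_mul_exp_tendsto (a := -b) (by linarith) 0).const_mul (max B 0)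
      rwa [mul_zero] at this
    apply squeeze_zero' (Filter.Eventually.of_forall fun t => norm_nonneg _) _ hg
    filter_upwards [eventually_gt_atTop (0:ℝ)] with t ht
    rw [norm_mul, pow_zero, one_mul]
    have he : ‖Complex.exp (-(b:ℂ) * t)‖ = Real.exp (-b * t) := by
      rw [Complex.norm_exp]
      congr 1
      simp [Complex.mul_re]
    rw [he]
    apply mul_le_mul_of_nonneg_right _ (Real.exp_nonneg _)
    exact le_max_of_le_left (hC t ht)
  -- Step 3 : S tends to 0
  have hS : Tendsto S atTop (𝓝 0) := by
    have := hF.sub hT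
    rw [sub_zero] at this
    apply this.congr
    intro t
    have hmul : Complex.exp ((b:ℂ) * t) * Complex.exp (-(b:ℂ) * t) = 1 := by
      rw [← Complex.exp_add]
      ring_nf
      exact Complex.exp_zero
    calc F t * Complex.exp (-(b:ℂ) * t) - T t * Complex.exp (-(b:ℂ) * t)
        = (Complex.exp ((b:ℂ) * t) * Complex.exp (-(b:ℂ) * t)) * S t := by
          rw [hFdef]; ring
      _ = S t := by rw [hmul, one_mul]
  -- Step 4 : choice of τ
  set Sk : ℝ := ∑ r : Fin n, |k r| with hSkdef
  have hSk0 : 0 ≤ Sk := Finset.sum_nonneg fun r _ => abs_nonneg _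
  have hSkb : ∀ r, |k r| ≤ Sk := fun r =>
    Finset.single_le_sum (f := fun r => |k r|) (fun i _ => abs_nonneg _) (Finset.mem_univ r)
  set τ : ℝ := Real.pi / (1 + 2 * Sk) with hτdef
  have hτpos : 0 < τ := div_pos Real.pi_pos (by linarith)
  set z : Fin n → ℂ := fun r => Complex.exp (Complex.I * (k r * τ)) with hzdef
  have hzinj : Function.Injective z := by
    intro r s hrs
    rw [hzdef] at hrs
    simp only [Complex.exp_eq_exp_iff_exists_int] at hrs
    obtain ⟨q, hq⟩ := hrs
    have hq2 : (Complex.I : ℂ) * (k r * τ) = Complex.I * (k s * τ + 2 * Real.pi * q) := by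
      rw [hq]; push_cast; ring
    have hq3 : ((k r * τ : ℝ) : ℂ) = ((k s * τ + 2 * Real.pi * q : ℝ) : ℂ) := by
      have := mul_left_cancel₀ Complex.I_ne_zero hq2
      push_cast at this ⊢
      convert this using 2 <;> push_cast <;> ring
    have hq4 : k r * τ = k s * τ + 2 * Real.pi * q := by exact_mod_cast hq3
    rcases eq_or_ne q 0 with rfl | hq0
    · apply hk
      have : (k r - k s) * τ = 0 := by push_cast at hq4; linarith
      rcases mul_eq_zero.mp this with h | h
      · linarith [sub_eq_zero.mp h]
      · exact absurd h (ne_of_gt hτpos)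
    · exfalso
      have habs : |k r - k s| * τ = 2 * Real.pi * |(q : ℝ)| := by
        have : (k r - k s) * τ = 2 * Real.pi * q := by linarith
        calc |k r - k s| * τ = |(k r - k s) * τ| := by
              rw [abs_mul, abs_of_pos hτpos]
          _ = |2 * Real.pi * (q:ℝ)| := by rw [this]
          _ = 2 * Real.pi * |(q:ℝ)| := by
              rw [abs_mul]
              congr 1
              exact abs_of_pos (by positivity)
      have h1q : (1:ℝ) ≤ |(q:ℝ)| := by
        rw [← Int.cast_abs]
        exact_mod_cast Int.one_le_abs hq0
      have hub : |k r - k s| * τ < 2 * Real.pi := by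
        have h1 : |k r - k s| ≤ 2 * Sk :=
          (abs_sub _ _).trans (by linarith [hSkb r, hSkb s])
        have h2 : |k r - k s| * τ ≤ 2 * Sk * τ :=
          mul_le_mul_of_nonneg_right h1 hτpos.le
        have h3 : 2 * Sk * τ < 2 * Real.pi := by
          rw [hτdef, ← mul_div_assoc, div_lt_iff₀ (by linarith : (0:ℝ) < 1 + 2 * Sk)]
          nlinarith [Real.pi_pos]
        linarith
      nlinarith [Real.pi_pos]
  -- Step 5 : discretization
  set P : Fin n → Polynomial ℂ := fun r => (Q r).comp (C (τ:ℂ) * X) with hPdef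
  have hdisc : Tendsto (fun N : ℕ => ∑ r, (P r).eval (N : ℂ) * z r ^ N) atTop (𝓝 0) := by
    have hNτ : Tendsto (fun N : ℕ => (N : ℝ) * τ) atTop atTop :=
      Tendsto.atTop_mul_const hτpos tendsto_natCast_atTop_atTop
    have := hS.comp hNτ
    apply this.congr
    intro N
    simp only [Function.comp_apply, hSdef]
    refine Finset.sum_congr rfl fun r _ => ?_
    congr 1
    · rw [hPdef, eval_comp, eval_mul, eval_C, eval_X]
      congr 1
      push_cast
      ring
    · rw [hzdef, ← Complex.exp_nat_mul]
      congr 1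
      push_cast
      ring
  have hfilter : (Finset.univ.filter (fun r : Fin n => P r ≠ 0)) = ∅ := by
    apply discrete_key (∑ i ∈ Finset.univ.filter (fun r : Fin n => P r ≠ 0), ((P i).natDegree + 1))
      _ z P le_rfl (hzinj.injOn)
    · intro i _
      rw [hzdef]
      rw [Complex.norm_exp]
      rw [show (Complex.I * ((k i : ℂ) * (τ : ℂ))).re = 0 by simp [Complex.mul_re], Real.exp_zero]
    · intro i hi
      exact (Finset.mem_filter.mp hi).2
    · apply hdisc.congr
      intro N
      symm
      apply Finset.sum_filter_of_ne
      intro r _ hne hP0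
      apply hne
      rw [hP0]
      simp
  -- Step 6 : contradiction
  obtain ⟨r, hr⟩ := hQ
  have hPr : P r ≠ 0 := by
    intro hcontra0
    have hcontra : (Q r).comp (C (τ:ℂ) * X) = 0 := hcontra0
    apply hr
    have hτℂ : (τ : ℂ) ≠ 0 := by exact_mod_cast hτpos.ne'
    have hdeg1 : (C (τ:ℂ) * X).natDegree = 1 := by
      rw [natDegree_C_mul_X _ hτℂ]
    have hlc : (C (τ:ℂ) * X).leadingCoeff = (τ:ℂ) := by
      rw [leadingCoeff, hdeg1]
      simp
    by_contra hQr0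
    have := leadingCoeff_comp (p := Q r) (q := C (τ:ℂ) * X) (by rw [hdeg1]; exact one_ne_zero)
    rw [hcontra, leadingCoeff_zero, hlc] at this
    have h2 := (mul_eq_zero.mp this.symm)
    rcases h2 with h2 | h2
    · exact hQr0 (leadingCoeff_eq_zero.mp h2)
    · exact hτℂ (pow_eq_zero_iff'.mp h2).1
  have : r ∈ Finset.univ.filter (fun r : Fin n => P r ≠ 0) :=
    Finset.mem_filter.mpr ⟨Finset.mem_univ r, hPr⟩
  rw [hfilter] at this
  exact absurd this (Finset.notMem_empty r)
end
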